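/- arXiv:2205.09873 — 11 statements merged into one kernel-verified Lean document; each statement's English description precedes it below -/
import Mathlib

section
/- Fix k, w, U ≥ 1, hash functions h_r : Fin U → Fin w for r ∈ Fin k, and a frequency function f : Fin U → ℕ, with noise-free Count-Min counters T[r,c] and noise-free estimate f̃. Let σ > 0, β ∈ (0,1), and set E = √2·σ·√(log(4·k·w/β)). Let (η[r,c])_{r ∈ Fin k, c ∈ Fin w} be independent N(0, σ²) random variables, define the noisy counters C[r,c] = T[r,c] + E + η[r,c], and the private Count-Min estimate f̂(x) = min_{r ∈ Fin k} C[r, h_r(x)]. Then with probability at least 1 − β/2 over the noise η, simultaneously for every item x ∈ Fin U, we have 0 ≤ f̂(x) − f̃(x) ≤ 2E. -/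
open MeasureTheory ProbabilityTheory Real
open scoped NNReal ENNReal

lemma gauss_tail_one (v : ℝ≥0) (hv : v ≠ 0) (E : ℝ) (hE : 0 ≤ E) :
    gaussianReal 0 v {x | E < x} ≤ ENNReal.ofReal (Real.exp (-E ^ 2 / (2 * v))) := by
  have hv' : (0 : ℝ) < (v : ℝ) := lt_of_le_of_ne v.coe_nonneg (by exact_mod_cast hv.symm)
  rw [gaussianReal_apply 0 hv]
  have hpt : ∀ x ∈ {x : ℝ | E < x},
      gaussianPDF 0 v x ≤ ENNReal.ofReal (Real.exp (-E ^ 2 / (2 * v))) * gaussianPDF E v x := by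
    intro x hx
    have hx' : E < x := hx
    rw [gaussianPDF, gaussianPDF, ← ENNReal.ofReal_mul (Real.exp_nonneg _)]
    apply ENNReal.ofReal_le_ofReal
    rw [gaussianPDFReal, gaussianPDFReal]
    rw [show Real.exp (-E ^ 2 / (2 * v)) * ((√(2 * π * v))⁻¹ * Real.exp (-(x - E) ^ 2 / (2 * v)))
        = (√(2 * π * v))⁻¹ * (Real.exp (-E ^ 2 / (2 * v)) * Real.exp (-(x - E) ^ 2 / (2 * v)))
        by ring]
    apply mul_le_mul_of_nonneg_left _ (by positivity)
    rw [← Real.exp_add]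
    apply Real.exp_le_exp.mpr
    rw [← add_div, div_le_div_iff_of_pos_right (by positivity)]
    nlinarith [sq_nonneg (x - E), mul_nonneg hE (le_of_lt (sub_pos.mpr hx'))]
  calc ∫⁻ x in {x : ℝ | E < x}, gaussianPDF 0 v x
      ≤ ∫⁻ x in {x : ℝ | E < x},
          ENNReal.ofReal (Real.exp (-E ^ 2 / (2 * v))) * gaussianPDF E v x :=
        setLIntegral_mono ((measurable_gaussianPDF E v).const_mul _) hpt
    _ ≤ ∫⁻ x, ENNReal.ofReal (Real.exp (-E ^ 2 / (2 * v))) * gaussianPDF E v x :=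
        lintegral_mono' Measure.restrict_le_self le_rfl
    _ = ENNReal.ofReal (Real.exp (-E ^ 2 / (2 * v))) * ∫⁻ x, gaussianPDF E v x :=
        lintegral_const_mul _ (measurable_gaussianPDF E v)
    _ = ENNReal.ofReal (Real.exp (-E ^ 2 / (2 * v))) := by
        rw [lintegral_gaussianPDF_eq_one E hv, mul_one]

lemma gauss_tail_abs (v : ℝ≥0) (hv : v ≠ 0) (E : ℝ) (hE : 0 ≤ E) :
    gaussianReal 0 v {x | E < |x|} ≤ ENNReal.ofReal (2 * Real.exp (-E ^ 2 / (2 * v))) := by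
  have hsub : {x : ℝ | E < |x|} ⊆ {x : ℝ | E < x} ∪ {x : ℝ | x < -E} := by
    intro x hx
    rcases abs_cases x with ⟨h1, _⟩ | ⟨h1, _⟩
    · left; simpa [h1] using hx
    · right; simp only [Set.mem_setOf_eq] at hx ⊢; rw [h1] at hx; linarith
  have hneg : gaussianReal 0 v {x : ℝ | x < -E} ≤ ENNReal.ofReal (Real.exp (-E ^ 2 / (2 * v))) := by
    have hmap := gaussianReal_map_const_mul (μ := 0) (v := v) (-1)
    have hveq : (NNReal.mk ((-1 : ℝ) ^ 2) (sq_nonneg _) * v : ℝ≥0) = v := by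
      apply NNReal.eq; rw [NNReal.coe_mul]; show (-1 : ℝ) ^ 2 * (v : ℝ) = v; norm_num
    rw [hveq, mul_zero] at hmap
    have hms : MeasurableSet {x : ℝ | E < x} := measurableSet_lt measurable_const measurable_id
    have := Measure.map_apply (f := fun x : ℝ => -1 * x)
      (measurable_id.const_mul (-1)) (μ := gaussianReal 0 v) hms
    rw [hmap] at this
    have hpre : (fun x : ℝ => -1 * x) ⁻¹' {x : ℝ | E < x} = {x : ℝ | x < -E} := by
      ext x; simp only [Set.mem_preimage, Set.mem_setOf_eq]; constructor <;> intro <;> linarith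
    rw [hpre] at this
    rw [← this]
    exact gauss_tail_one v hv E hE
  calc gaussianReal 0 v {x | E < |x|}
      ≤ gaussianReal 0 v ({x : ℝ | E < x} ∪ {x : ℝ | x < -E}) := measure_mono hsub
    _ ≤ gaussianReal 0 v {x : ℝ | E < x} + gaussianReal 0 v {x : ℝ | x < -E} := measure_union_le _ _
    _ ≤ ENNReal.ofReal (Real.exp (-E ^ 2 / (2 * v))) + ENNReal.ofReal (Real.exp (-E ^ 2 / (2 * v))) :=
        add_le_add (gauss_tail_one v hv E hE) hneg
    _ = ENNReal.ofReal (2 * Real.exp (-E ^ 2 / (2 * v))) := by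
        rw [← ENNReal.ofReal_add (Real.exp_nonneg _) (Real.exp_nonneg _)]; ring_nf

/-- Private Count-Min with shifted Gaussian noise `E + N(0,σ²)` added to each
counter: with probability at least `1 - β/2` over the noise, simultaneously for every item `x`,
`0 ≤ f̂(x) - f̃(x) ≤ 2E`, where `E = √2·σ·√(log(4kw/β))`. -/
theorem stmt1 {Ω : Type*} [MeasurableSpace Ω] (P : Measure Ω) [IsProbabilityMeasure P]
    (k w U : ℕ) (hk : 1 ≤ k) (hw : 1 ≤ w) (hU : 1 ≤ U)
    (h : Fin k → Fin U → Fin w) (f : Fin U → ℕ)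
    (σ β : ℝ) (hσ : 0 < σ) (hβ : β ∈ Set.Ioo (0 : ℝ) 1)
    (E : ℝ) (hE : E = Real.sqrt 2 * σ * Real.sqrt (Real.log (4 * k * w / β)))
    (η : Fin k × Fin w → Ω → ℝ)
    (hmeas : ∀ p, Measurable (η p))
    (hindep : iIndepFun η P)
    (hdist : ∀ p, Measure.map (η p) P = gaussianReal 0 ⟨σ ^ 2, sq_nonneg σ⟩)
    (T : Fin k → Fin w → ℝ)
    (hT : ∀ r c, T r c = ∑ y ∈ Finset.univ.filter (fun y => h r y = c), (f y : ℝ))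
    (ftilde : Fin U → ℝ)
    (hft : ∀ x, ftilde x = ⨅ r : Fin k, T r (h r x))
    (C : Fin k → Fin w → Ω → ℝ)
    (hC : ∀ r c ω, C r c ω = T r c + E + η (r, c) ω)
    (fhat : Fin U → Ω → ℝ)
    (hfh : ∀ x ω, fhat x ω = ⨅ r : Fin k, C r (h r x) ω) :
    ENNReal.ofReal (1 - β / 2) ≤
      P {ω | ∀ x, 0 ≤ fhat x ω - ftilde x ∧ fhat x ω - ftilde x ≤ 2 * E} := by
  obtain ⟨hβ0, hβ1⟩ := hβ
  have hkw : (0 : ℝ) < (k : ℝ) * w := by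
    have : (1 : ℝ) ≤ (k : ℝ) := by exact_mod_cast hk
    have : (1 : ℝ) ≤ (w : ℝ) := by exact_mod_cast hw
    nlinarith [show (1:ℝ) ≤ (k:ℝ) from by exact_mod_cast hk]
  have harg : (1 : ℝ) < 4 * k * w / β := by
    rw [lt_div_iff₀ hβ0]
    have h1k : (1:ℝ) ≤ (k:ℝ) := by exact_mod_cast hk
    have h1w : (1:ℝ) ≤ (w:ℝ) := by exact_mod_cast hw
    nlinarith
  have hlog : 0 < Real.log (4 * k * w / β) := Real.log_pos harg
  have hE0 : 0 ≤ E := by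
    rw [hE]; positivity
  -- variance
  set v : ℝ≥0 := ⟨σ ^ 2, sq_nonneg σ⟩ with hvdef
  have hv : v ≠ 0 := by
    rw [← NNReal.coe_ne_zero]; show σ ^ 2 ≠ 0
    positivity
  -- key numeric identity
  have hEsq : E ^ 2 = 2 * σ ^ 2 * Real.log (4 * k * w / β) := by
    rw [hE, mul_pow, mul_pow, Real.sq_sqrt (by norm_num : (2:ℝ) ≥ 0),
      Real.sq_sqrt hlog.le]
  have hexp : Real.exp (-E ^ 2 / (2 * (v : ℝ))) = β / (4 * k * w) := by
    have hvr : (v : ℝ) = σ ^ 2 := rfl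
    rw [hvr, hEsq]
    have : -(2 * σ ^ 2 * Real.log (4 * k * w / β)) / (2 * σ ^ 2)
        = -Real.log (4 * k * w / β) := by
      field_simp
    rw [this, Real.exp_neg, Real.exp_log (by positivity), inv_div]
  -- the bad event
  set Bad : Set Ω := ⋃ p : Fin k × Fin w, (η p) ⁻¹' {x : ℝ | E < |x|} with hBad
  have hBadMeas : MeasurableSet Bad :=
    MeasurableSet.iUnion fun p => (hmeas p) (measurableSet_lt measurable_const measurable_abs)
  have hBadLe : P Bad ≤ ENNReal.ofReal (β / 2) := by
    have hms : MeasurableSet {x : ℝ | E < |x|} :=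
      measurableSet_lt measurable_const measurable_abs
    have hone : ∀ p : Fin k × Fin w,
        P ((η p) ⁻¹' {x : ℝ | E < |x|}) ≤ ENNReal.ofReal (β / (2 * k * w)) := by
      intro p
      have hmap : P ((η p) ⁻¹' {x : ℝ | E < |x|}) = (Measure.map (η p) P) {x : ℝ | E < |x|} :=
        (Measure.map_apply (hmeas p) hms).symm
      rw [hmap, hdist p]
      refine le_trans (gauss_tail_abs v hv E hE0) ?_
      rw [hexp]
      apply ENNReal.ofReal_le_ofReal
      have hkne : (k : ℝ) ≠ 0 := by positivity
      have hwne : (w : ℝ) ≠ 0 := by positivity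
      refine le_of_eq ?_
      field_simp
      ring
    calc P Bad ≤ ∑ p : Fin k × Fin w, P ((η p) ⁻¹' {x : ℝ | E < |x|}) :=
          measure_iUnion_fintype_le P _
      _ ≤ ∑ _p : Fin k × Fin w, ENNReal.ofReal (β / (2 * k * w)) :=
          Finset.sum_le_sum fun p _ => hone p
      _ = (k * w : ℕ) * ENNReal.ofReal (β / (2 * k * w)) := by
          rw [Finset.sum_const, Finset.card_univ, Fintype.card_prod, Fintype.card_fin,
            Fintype.card_fin, nsmul_eq_mul]
      _ = ENNReal.ofReal ((k * w : ℕ) * (β / (2 * k * w))) := by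
          rw [ENNReal.ofReal_mul (by positivity), ENNReal.ofReal_natCast]
      _ = ENNReal.ofReal (β / 2) := by
          congr 1
          push_cast
          field_simp
  -- the good event implies the conclusion
  have hGoodSub : Badᶜ ⊆ {ω | ∀ x, 0 ≤ fhat x ω - ftilde x ∧ fhat x ω - ftilde x ≤ 2 * E} := by
    intro ω hω
    simp only [hBad, Set.compl_iUnion, Set.mem_iInter, Set.mem_compl_iff, Set.mem_preimage,
      Set.mem_setOf_eq, not_lt] at hω
    intro x
    have hbdd : BddBelow (Set.range fun r : Fin k => T r (h r x)) :=
      (Set.finite_range _).bddBelow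
    have hbddC : BddBelow (Set.range fun r : Fin k => C r (h r x) ω) :=
      (Set.finite_range _).bddBelow
    haveI : Nonempty (Fin k) := ⟨⟨0, hk⟩⟩
    have hCbound : ∀ r : Fin k, T r (h r x) ≤ C r (h r x) ω ∧
        C r (h r x) ω ≤ T r (h r x) + 2 * E := by
      intro r
      have habs := hω (r, h r x)
      have h1 : -E ≤ η (r, h r x) ω := neg_le_of_abs_le habs
      have h2 : η (r, h r x) ω ≤ E := le_of_abs_le habs
      rw [hC]
      constructor <;> linarith
    constructor
    · rw [hfh, hft, sub_nonneg]
      exact ciInf_mono hbdd fun r => (hCbound r).1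
    · -- fhat ≤ ftilde + 2E
      obtain ⟨r₀, _, hr₀⟩ := Finset.exists_min_image Finset.univ
        (fun r : Fin k => T r (h r x)) ⟨Classical.arbitrary _, Finset.mem_univ _⟩
      have hmin : ftilde x = T r₀ (h r₀ x) := by
        rw [hft]
        exact le_antisymm (ciInf_le hbdd r₀) (le_ciInf fun r => hr₀ r (Finset.mem_univ r))
      rw [hfh, sub_le_iff_le_add]
      calc (⨅ r : Fin k, C r (h r x) ω) ≤ C r₀ (h r₀ x) ω := ciInf_le hbddC r₀
        _ ≤ T r₀ (h r₀ x) + 2 * E := (hCbound r₀).2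
        _ = 2 * E + ftilde x := by rw [hmin]; ring
  -- combine
  have hcompl : P Badᶜ = 1 - P Bad := prob_compl_eq_one_sub hBadMeas
  calc ENNReal.ofReal (1 - β / 2) = ENNReal.ofReal 1 - ENNReal.ofReal (β / 2) :=
        ENNReal.ofReal_sub 1 (by positivity)
    _ = 1 - ENNReal.ofReal (β / 2) := by rw [ENNReal.ofReal_one]
    _ ≤ 1 - P Bad := tsub_le_tsub le_rfl hBadLe
    _ = P Badᶜ := hcompl.symm
    _ ≤ P {ω | ∀ x, 0 ≤ fhat x ω - ftilde x ∧ fhat x ω - ftilde x ≤ 2 * E} :=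
        measure_mono hGoodSub
end

section
/- Fix U, w ≥ 1, an odd number of rows k = 2m+1, hash functions h_r : Fin U → Fin w and sign functions g_r : Fin U → {−1,+1} for r ∈ Fin k, and a frequency function f : Fin U → ℕ, with noise-free CountSketch counters T[r,c] and noise-free estimate f̃. Let σ > 0, β ∈ (0,1), and set E = √2·σ·√(log(4·k·w/β)). Let (η[r,c])_{r ∈ Fin k, c ∈ Fin w} be independent N(0, σ²) random variables, define the noisy counters C[r,c] = T[r,c] + η[r,c], and the private CountSketch estimate f̂(x) = median_{r ∈ Fin k} g_r(x)·C[r, h_r(x)]. Then with probability at least 1 − β/2 over the noise η, simultaneously for every item x ∈ Fin U, we have |f̂(x) − f̃(x)| ≤ E. -/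
open MeasureTheory ProbabilityTheory Real


section Helpers
open NNReal

lemma sorted_getElem_le_of_countP {l : List ℝ} (hl : l.Pairwise (· ≤ ·)) {i : ℕ}
    (hi : i < l.length) {v : ℝ}
    (hc : i + 1 ≤ l.countP (fun x => decide (x ≤ v))) : l[i] ≤ v := by
  by_contra hlt
  push_neg at hlt
  set p : ℝ → Bool := fun x => decide (x ≤ v) with hp
  have hsplit : l.countP p = (l.take i).countP p + (l.drop i).countP p := by
    conv_lhs => rw [← List.take_append_drop i l]
    exact List.countP_append
  have hdrop : (l.drop i).countP p = 0 := by
    rw [List.countP_eq_zero]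
    intro a ha
    obtain ⟨j, hj, rfl⟩ := List.mem_iff_getElem.1 ha
    rw [List.getElem_drop]
    have hij : i ≤ i + j := Nat.le_add_right _ _
    have hlen : i + j < l.length := by
      have := hj; rw [List.length_drop] at this; omega
    have : l[i] ≤ l[i + j] := by
      rcases Nat.eq_or_lt_of_le hij with he | hlt'
      · simp [← he]
      · exact List.pairwise_iff_getElem.1 hl i (i + j) hi hlen hlt'
    simp only [hp, decide_eq_true_eq, decide_eq_false_iff_not, not_le]
    linarith
  have htake : (l.take i).countP p ≤ i := by
    have := List.countP_le_length (p := p) (l := l.take i)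
    simpa [List.length_take, min_le_iff] using this.trans (by simp [List.length_take])
  omega

lemma countP_sorted_getElem {l : List ℝ} (hl : l.Pairwise (· ≤ ·)) {i : ℕ}
    (hi : i < l.length) : i + 1 ≤ l.countP (fun x => decide (x ≤ l[i])) := by
  set p : ℝ → Bool := fun x => decide (x ≤ l[i]) with hp
  have hsplit : l.countP p = (l.take (i+1)).countP p + (l.drop (i+1)).countP p := by
    conv_lhs => rw [← List.take_append_drop (i+1) l]
    exact List.countP_append
  have htake : (l.take (i+1)).countP p = i + 1 := by
    rw [List.countP_eq_length.2, List.length_take, min_eq_left (by omega)]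
    intro a ha
    obtain ⟨j, hj, rfl⟩ := List.mem_iff_getElem.1 ha
    rw [List.getElem_take]
    have hjlen : j < l.length := by
      have := hj; rw [List.length_take] at this; omega
    have hji : j ≤ i := by
      have := hj; rw [List.length_take] at this; omega
    have : l[j] ≤ l[i] := by
      rcases Nat.eq_or_lt_of_le hji with he | hlt'
      · subst he; simp
      · exact List.pairwise_iff_getElem.1 hl j i hjlen hi hlt'
    simpa [hp] using this
  omega


lemma gaussianPDFReal_shift_bound {v : ℝ≥0} (hv : (0:ℝ) < v) {E x μ' : ℝ}
    (hx : E ^ 2 + μ' ^ 2 ≤ 2 * (x * μ')) :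
    gaussianPDFReal 0 v x ≤ Real.exp (-(E^2) / (2*v)) * gaussianPDFReal μ' v x := by
  unfold gaussianPDFReal
  rw [show Real.exp (-(E^2)/(2*(v:ℝ))) * ((√(2*π*(v:ℝ)))⁻¹ * Real.exp (-(x-μ')^2/(2*(v:ℝ))))
      = (√(2*π*(v:ℝ)))⁻¹ * Real.exp (-(E^2)/(2*(v:ℝ)) + -(x-μ')^2/(2*(v:ℝ))) by
    rw [mul_left_comm, ← Real.exp_add]]
  gcongr
  rw [← add_div, div_le_div_iff_of_pos_right (by positivity)]
  nlinarith [sq_nonneg (x - μ')]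

lemma gaussianReal_tail_shift {v : ℝ≥0} (hv : v ≠ 0) {E : ℝ} (μ' : ℝ) {s : Set ℝ}
    (hs : ∀ x ∈ s, E ^ 2 + μ' ^ 2 ≤ 2 * (x * μ')) :
    gaussianReal 0 v s ≤ ENNReal.ofReal (Real.exp (-(E^2) / (2*v))) := by
  have hv' : (0:ℝ) < v := by positivity
  rw [gaussianReal_apply 0 hv]
  calc ∫⁻ x in s, gaussianPDF 0 v x
      ≤ ∫⁻ x in s, ENNReal.ofReal (Real.exp (-(E^2) / (2*v))) * gaussianPDF μ' v x := by
        refine setLIntegral_mono ((measurable_gaussianPDF μ' v).const_mul _) (fun x hx => ?_)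
        rw [gaussianPDF, gaussianPDF, ← ENNReal.ofReal_mul (Real.exp_nonneg _)]
        exact ENNReal.ofReal_le_ofReal (gaussianPDFReal_shift_bound hv' (hs x hx))
    _ ≤ ∫⁻ x, ENNReal.ofReal (Real.exp (-(E^2) / (2*v))) * gaussianPDF μ' v x :=
        setLIntegral_le_lintegral _ _
    _ = ENNReal.ofReal (Real.exp (-(E^2) / (2*v))) := by
        rw [lintegral_const_mul _ (measurable_gaussianPDF μ' v),
          lintegral_gaussianPDF_eq_one μ' hv, mul_one]

lemma gaussianReal_abs_tail {v : ℝ≥0} (hv : v ≠ 0) {E : ℝ} (hE : 0 ≤ E) :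
    gaussianReal 0 v {x | ¬ |x| ≤ E} ≤ ENNReal.ofReal (2 * Real.exp (-(E^2) / (2*v))) := by
  have hsub : {x : ℝ | ¬ |x| ≤ E} ⊆ {x | E ≤ x} ∪ {x | x ≤ -E} := by
    intro x hx
    simp only [Set.mem_setOf_eq, not_le] at hx
    rcases le_or_gt 0 x with h0 | h0
    · left; rw [abs_of_nonneg h0] at hx; exact le_of_lt hx
    · right; rw [abs_of_neg h0] at hx; simp only [Set.mem_setOf_eq]; linarith
  calc gaussianReal 0 v {x | ¬ |x| ≤ E}
      ≤ gaussianReal 0 v ({x | E ≤ x} ∪ {x | x ≤ -E}) := measure_mono hsub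
    _ ≤ gaussianReal 0 v {x | E ≤ x} + gaussianReal 0 v {x | x ≤ -E} := measure_union_le _ _
    _ ≤ ENNReal.ofReal (Real.exp (-(E^2) / (2*v))) + ENNReal.ofReal (Real.exp (-(E^2) / (2*v))) := by
        refine add_le_add (gaussianReal_tail_shift hv E (fun x hx => ?_))
          (gaussianReal_tail_shift hv (-E) (fun x hx => ?_))
        · simp only [Set.mem_setOf_eq] at hx; nlinarith
        · simp only [Set.mem_setOf_eq] at hx; nlinarith
    _ = ENNReal.ofReal (2 * Real.exp (-(E^2) / (2*v))) := by
        rw [← ENNReal.ofReal_add (Real.exp_nonneg _) (Real.exp_nonneg _)]; ring_nf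

end Helpers

/-- The median of a tuple of `2m+1` reals: its `(m+1)`-st smallest entry with multiplicity. -/
noncomputable def median {m : ℕ} (a : Fin (2 * m + 1) → ℝ) : ℝ :=
  (Multiset.sort (Multiset.map a Finset.univ.val) (· ≤ ·))[m]'(by
    simp [Multiset.length_sort]; omega)

lemma countP_list_eq_card {m : ℕ} (a : Fin (2 * m + 1) → ℝ) (v : ℝ) :
    (Multiset.sort (Multiset.map a Finset.univ.val) (· ≤ ·)).countP (fun x => decide (x ≤ v))
      = (Finset.univ.filter (fun r => a r ≤ v)).card := by
  have h1 : ((Multiset.sort (Multiset.map a Finset.univ.val) (· ≤ ·) : List ℝ) : Multiset ℝ)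
      = Multiset.map a Finset.univ.val := Multiset.sort_eq ..
  have := Multiset.coe_countP (fun x : ℝ => x ≤ v)
    (Multiset.sort (Multiset.map a Finset.univ.val) (· ≤ ·))
  rw [h1] at this
  rw [← this, Multiset.countP_map]
  rfl

lemma median_le_of_card {m : ℕ} {a : Fin (2 * m + 1) → ℝ} {v : ℝ}
    (hc : m + 1 ≤ (Finset.univ.filter (fun r => a r ≤ v)).card) : median a ≤ v := by
  set l := Multiset.sort (Multiset.map a Finset.univ.val) (· ≤ ·) with hl
  have hsorted : l.Pairwise (· ≤ ·) := Multiset.pairwise_sort ..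
  have hlen : m < l.length := by simp [hl, Multiset.length_sort]; omega
  exact sorted_getElem_le_of_countP hsorted hlen (by rw [countP_list_eq_card]; exact hc)

lemma card_le_median {m : ℕ} (a : Fin (2 * m + 1) → ℝ) :
    m + 1 ≤ (Finset.univ.filter (fun r => a r ≤ median a)).card := by
  rw [← countP_list_eq_card]
  set l := Multiset.sort (Multiset.map a Finset.univ.val) (· ≤ ·) with hl
  have hsorted : l.Pairwise (· ≤ ·) := Multiset.pairwise_sort ..
  have hlen : m < l.length := by simp [hl, Multiset.length_sort]; omega
  exact countP_sorted_getElem hsorted hlen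

lemma median_le_median_add {m : ℕ} {a b : Fin (2 * m + 1) → ℝ} {ε : ℝ}
    (hab : ∀ r, a r ≤ b r + ε) : median a ≤ median b + ε := by
  apply median_le_of_card
  refine le_trans (card_le_median b) (Finset.card_le_card ?_)
  intro r hr
  simp only [Finset.mem_filter, Finset.mem_univ, true_and] at hr ⊢
  exact (hab r).trans (by linarith)

lemma abs_median_sub_median_le {m : ℕ} {a b : Fin (2 * m + 1) → ℝ} {ε : ℝ}
    (hab : ∀ r, |a r - b r| ≤ ε) : |median a - median b| ≤ ε := by
  rw [abs_sub_le_iff]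
  constructor
  · have := median_le_median_add (a := a) (b := b) (ε := ε)
      (fun r => by have := hab r; rw [abs_sub_le_iff] at this; linarith [this.1])
    linarith
  · have := median_le_median_add (a := b) (b := a) (ε := ε)
      (fun r => by have := hab r; rw [abs_sub_le_iff] at this; linarith [this.2])
    linarith

/-- Private CountSketch with Gaussian noise `N(0,σ²)` added to each counter:
with probability at least `1 - β/2` over the noise, simultaneously for every item `x`,
`|f̂(x) - f̃(x)| ≤ E`, where `E = √2·σ·√(log(4kw/β))` and `k = 2m+1`. -/
theorem stmt2 {Ω : Type*} [MeasurableSpace Ω] (P : Measure Ω) [IsProbabilityMeasure P]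
    (m w U : ℕ) (hw : 1 ≤ w) (hU : 1 ≤ U)
    (h : Fin (2 * m + 1) → Fin U → Fin w) (g : Fin (2 * m + 1) → Fin U → ℝ)
    (hg : ∀ r y, g r y = 1 ∨ g r y = -1) (f : Fin U → ℕ)
    (σ β : ℝ) (hσ : 0 < σ) (hβ : β ∈ Set.Ioo (0 : ℝ) 1)
    (E : ℝ) (hE : E = Real.sqrt 2 * σ * Real.sqrt (Real.log (4 * (2 * m + 1) * w / β)))
    (η : Fin (2 * m + 1) × Fin w → Ω → ℝ)
    (hmeas : ∀ p, Measurable (η p))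
    (hindep : iIndepFun η P)
    (hdist : ∀ p, Measure.map (η p) P = gaussianReal 0 ⟨σ ^ 2, sq_nonneg σ⟩)
    (T : Fin (2 * m + 1) → Fin w → ℝ)
    (hT : ∀ r c, T r c = ∑ y ∈ Finset.univ.filter (fun y => h r y = c), g r y * (f y : ℝ))
    (ftilde : Fin U → ℝ)
    (hft : ∀ x, ftilde x = median (fun r => g r x * T r (h r x)))
    (C : Fin (2 * m + 1) → Fin w → Ω → ℝ)
    (hC : ∀ r c ω, C r c ω = T r c + η (r, c) ω)
    (fhat : Fin U → Ω → ℝ)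
    (hfh : ∀ x ω, fhat x ω = median (fun r => g r x * C r (h r x) ω)) :
    ENNReal.ofReal (1 - β / 2) ≤
      P {ω | ∀ x, |fhat x ω - ftilde x| ≤ E} := by
  obtain ⟨hβ0, hβ1⟩ := hβ
  -- abbreviations
  set v : NNReal := ⟨σ ^ 2, sq_nonneg σ⟩ with hvdef
  have hvR : (v : ℝ) = σ ^ 2 := rfl
  have hv : v ≠ 0 := by
    intro h0
    have : (v : ℝ) = 0 := by rw [h0]; simp
    rw [hvR] at this
    exact (pow_ne_zero 2 hσ.ne') this
  have hNpos : (0:ℝ) < (2 * (m:ℝ) + 1) * w := by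
    have : (1:ℝ) ≤ (w:ℝ) := by exact_mod_cast hw
    nlinarith [Nat.cast_nonneg (α := ℝ) m]
  have hApos : (0:ℝ) < 4 * (2 * (m:ℝ) + 1) * w / β := by positivity
  have hR1 : (1:ℝ) < 4 * (2 * (m:ℝ) + 1) * w / β := by
    rw [lt_div_iff₀ hβ0]
    have hw' : (1:ℝ) ≤ (w:ℝ) := by exact_mod_cast hw
    nlinarith [Nat.cast_nonneg (α := ℝ) m]
  have hL : 0 ≤ Real.log (4 * (2 * (m:ℝ) + 1) * w / β) := Real.log_nonneg hR1.le
  have hE0 : 0 ≤ E := by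
    rw [hE]
    positivity
  have hE2 : E ^ 2 = 2 * σ ^ 2 * Real.log (4 * (2 * (m:ℝ) + 1) * w / β) := by
    rw [hE, mul_pow, mul_pow, Real.sq_sqrt (by norm_num : (0:ℝ) ≤ 2), Real.sq_sqrt hL]
  have hexp : Real.exp (-(E ^ 2) / (2 * (v:ℝ))) = β / (4 * (2 * (m:ℝ) + 1) * w) := by
    have hσ2 : (0:ℝ) < σ ^ 2 := by positivity
    have : -(E ^ 2) / (2 * (v:ℝ)) = - Real.log (4 * (2 * (m:ℝ) + 1) * w / β) := by
      rw [hvR, hE2]; field_simp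
    rw [this, Real.exp_neg, Real.exp_log hApos, ← one_div, one_div_div]
  -- the good event
  set G : Set Ω := ⋂ p : Fin (2 * m + 1) × Fin w, {ω | |η p ω| ≤ E} with hGdef
  have hGm : MeasurableSet G := by
    refine MeasurableSet.iInter fun p => ?_
    exact measurableSet_le (hmeas p).abs measurable_const
  -- bound on the bad event for each p
  have hbad : ∀ p : Fin (2 * m + 1) × Fin w,
      P {ω | ¬ |η p ω| ≤ E} ≤ ENNReal.ofReal (2 * (β / (4 * (2 * (m:ℝ) + 1) * w))) := by
    intro p
    have hsetm : MeasurableSet {x : ℝ | ¬ |x| ≤ E} := by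
      have : {x : ℝ | ¬ |x| ≤ E} = {x : ℝ | |x| ≤ E}ᶜ := rfl
      rw [this]
      exact (measurableSet_le measurable_abs measurable_const).compl
    have hpre : {ω | ¬ |η p ω| ≤ E} = η p ⁻¹' {x : ℝ | ¬ |x| ≤ E} := rfl
    rw [hpre, ← Measure.map_apply (hmeas p) hsetm, hdist p]
    exact le_trans (gaussianReal_abs_tail hv hE0) (le_of_eq (by rw [hexp]))
  -- union bound
  have hcompl : Gᶜ = ⋃ p : Fin (2 * m + 1) × Fin w, {ω | ¬ |η p ω| ≤ E} := by
    rw [hGdef, Set.compl_iInter]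
    rfl
  have hGc : P Gᶜ ≤ ENNReal.ofReal (β / 2) := by
    rw [hcompl]
    refine le_trans (measure_iUnion_fintype_le _ _) ?_
    refine le_trans (Finset.sum_le_sum fun p _ => hbad p) ?_
    rw [Finset.sum_const, Finset.card_univ, Fintype.card_prod, Fintype.card_fin,
      Fintype.card_fin, nsmul_eq_mul, ← ENNReal.ofReal_natCast,
      ← ENNReal.ofReal_mul (Nat.cast_nonneg _)]
    refine ENNReal.ofReal_le_ofReal (le_of_eq ?_)
    push_cast
    field_simp
    ring
  have hG : ENNReal.ofReal (1 - β / 2) ≤ P G := by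
    have h1 : P G = 1 - P Gᶜ := by
      have h2 := prob_compl_eq_one_sub (μ := P) hGm.compl
      rw [compl_compl] at h2
      exact h2
    rw [h1, ENNReal.ofReal_sub 1 (by positivity), ENNReal.ofReal_one]
    exact tsub_le_tsub_left hGc 1
  -- the good event implies the conclusion
  refine le_trans hG (measure_mono ?_)
  intro ω hω
  simp only [Set.mem_setOf_eq]
  intro x
  have hηω : ∀ p : Fin (2 * m + 1) × Fin w, |η p ω| ≤ E := by
    intro p
    exact Set.mem_iInter.1 hω p
  rw [hfh, hft]
  refine abs_median_sub_median_le fun r => ?_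
  have : g r x * C r (h r x) ω - g r x * T r (h r x) = g r x * η (r, h r x) ω := by
    rw [hC]; ring
  rw [this, abs_mul]
  rcases hg r x with h1 | h1 <;> rw [h1] <;> simpa using hηω (r, h r x)
end

section
/- Let U, w ≥ 1, let k = 2m+1 be odd, let f : Fin U → ℤ, let σ ≥ 0, and fix an item x ∈ Fin U. Suppose the random variables (h_r(y))_{r ∈ Fin k, y ∈ Fin U} are i.i.d. uniform on Fin w, the random variables (g_r(y))_{r ∈ Fin k, y ∈ Fin U} are i.i.d. uniform on {−1,+1}, the random variables (η[r,c])_{r ∈ Fin k, c ∈ Fin w} are i.i.d. N(0, σ²), and these three families are mutually independent. Define the private CountSketch estimate f̂(x) = median_{r ∈ Fin k} g_r(x)·( Σ_{y ∈ Fin U} f(y)·g_r(y)·1{h_r(y) = h_r(x)} + η[r, h_r(x)] ). Then E[f̂(x)] = f(x); i.e., the private CountSketch frequency estimate is unbiased. -/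
open MeasureTheory ProbabilityTheory Real
open scoped ENNReal NNReal

/-- Index type for the random variables of a private CountSketch with `k` rows, universe size
`U` and `w` columns: hash values `h_r(y)`, sign values `g_r(y)` and noise values `η[r,c]`. -/
inductive CSIdx (k U w : ℕ) : Type
  | hash : Fin k → Fin U → CSIdx k U w
  | sign : Fin k → Fin U → CSIdx k U w
  | noise : Fin k → Fin w → CSIdx k U w

/-- Codomain of each random variable: hash values live in `Fin w`, signs and noises in `ℝ`. -/
def CSIdx.codomain {k U w : ℕ} : CSIdx k U w → Type
  | .hash _ _ => Fin w
  | .sign _ _ => ℝ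
  | .noise _ _ => ℝ

instance {k U w : ℕ} (i : CSIdx k U w) : MeasurableSpace i.codomain :=
  match i with
  | .hash _ _ => inferInstanceAs (MeasurableSpace (Fin w))
  | .sign _ _ => inferInstanceAs (MeasurableSpace ℝ)
  | .noise _ _ => inferInstanceAs (MeasurableSpace ℝ)

/-- The combined family of random variables of a private CountSketch. -/
def CSVars {Ω : Type*} {k U w : ℕ} (h : Fin k → Fin U → Ω → Fin w)
    (g : Fin k → Fin U → Ω → ℝ) (η : Fin k → Fin w → Ω → ℝ) :
    ∀ i : CSIdx k U w, Ω → i.codomain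
  | .hash r y => h r y
  | .sign r y => g r y
  | .noise r c => η r c

/-! ### Auxiliary median lemmas -/

namespace MedianAux

variable {m : ℕ}

lemma median_eq_of_monotone (a : Fin (2 * m + 1) → ℝ) (τ : Equiv.Perm (Fin (2 * m + 1)))
    (hm : Monotone (a ∘ τ)) : median a = a (τ ⟨m, by omega⟩) := by
  have hperm : (Multiset.map a Finset.univ.val) = ↑(List.ofFn (a ∘ τ)) := by
    rw [List.ofFn_eq_map]
    have h1 : (↑((List.finRange (2 * m + 1)).map (a ∘ τ)) : Multiset ℝ)
        = Multiset.map a (Multiset.map τ Finset.univ.val) := by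
      simp [Multiset.map_map, Fin.univ_def]
    have h2 : Multiset.map (⇑τ) Finset.univ.val = Finset.univ.val := by
      calc Multiset.map (⇑τ) Finset.univ.val = (Finset.univ.map τ.toEmbedding).val := rfl
        _ = Finset.univ.val := by rw [Finset.map_univ_equiv]
    rw [h1, h2]
  have hsorted : (List.ofFn (a ∘ τ)).Pairwise (· ≤ ·) :=
    List.sortedLE_iff_pairwise.1 (List.sortedLE_ofFn_iff.2 hm)
  have hlist : Multiset.sort (Multiset.map a Finset.univ.val) (· ≤ ·) = List.ofFn (a ∘ τ) := by
    apply List.Perm.eq_of_pairwise' (Multiset.pairwise_sort _ _) hsorted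
    rw [← Multiset.coe_eq_coe, Multiset.sort_eq, hperm]
  simp only [median, hlist]
  rw [List.getElem_ofFn]
  rfl

lemma exists_median_eq (a : Fin (2 * m + 1) → ℝ) : ∃ i, median a = a i :=
  ⟨Tuple.sort a ⟨m, by omega⟩, median_eq_of_monotone a (Tuple.sort a) (Tuple.monotone_sort a)⟩

lemma median_neg (a : Fin (2 * m + 1) → ℝ) : median (fun r => -(a r)) = -median a := by
  set τ := Tuple.sort a with hτ
  have hmono := Tuple.monotone_sort a
  have h1 : median a = a (τ ⟨m, by omega⟩) := median_eq_of_monotone a τ hmono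
  have hrev : (Fin.revPerm.trans τ : Equiv.Perm (Fin (2 * m + 1))) ⟨m, by omega⟩
      = τ ⟨m, by omega⟩ := by
    simp only [Equiv.trans_apply, Fin.revPerm_apply]
    congr 1
    ext
    simp [Fin.rev]
    omega
  have h2 : median (fun r => -(a r)) = -(a (τ ⟨m, by omega⟩)) := by
    rw [median_eq_of_monotone (fun r => -(a r)) (Fin.revPerm.trans τ)
      (by
        intro i j hij
        simp only [Function.comp_apply, Equiv.trans_apply, Fin.revPerm_apply, neg_le_neg_iff]
        exact hmono (by simpa [Fin.rev_le_rev] using hij)), hrev]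
  rw [h1, h2]

lemma median_const_add (c : ℝ) (a : Fin (2 * m + 1) → ℝ) :
    median (fun r => c + a r) = c + median a := by
  set τ := Tuple.sort a with hτ
  have hmono := Tuple.monotone_sort a
  rw [median_eq_of_monotone a τ hmono,
    median_eq_of_monotone (fun r => c + a r) τ
      (fun i j hij => by simpa using hmono hij)]

lemma exists_median_le {S : Finset (Fin (2 * m + 1))} (hS : S.card = m + 1)
    (a : Fin (2 * m + 1) → ℝ) : ∃ i ∈ S, median a ≤ a i := by
  set τ := Tuple.sort a with hτ
  have hmono := Tuple.monotone_sort a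
  have h1 : median a = a (τ ⟨m, by omega⟩) := median_eq_of_monotone a τ hmono
  by_contra hc
  push_neg at hc
  have hsub : S.image τ.symm ⊆ Finset.Iio (⟨m, by omega⟩ : Fin (2 * m + 1)) := by
    intro j hj
    obtain ⟨i, hiS, hij⟩ := Finset.mem_image.1 hj
    rw [Finset.mem_Iio]
    by_contra hge
    push_neg at hge
    have : a (τ ⟨m, by omega⟩) ≤ a (τ j) := hmono hge
    rw [← hij] at this
    simp only [Equiv.apply_symm_apply] at this
    exact absurd (hc i hiS) (not_lt.2 (h1 ▸ this))
  have hcard : (S.image τ.symm).card = m + 1 := by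
    rw [Finset.card_image_of_injective _ τ.symm.injective, hS]
  have := Finset.card_le_card hsub
  rw [hcard, Fin.card_Iio] at this
  exact Nat.not_succ_le_self m this

lemma median_le_of_card {S : Finset (Fin (2 * m + 1))} (hS : S.card = m + 1)
    (a : Fin (2 * m + 1) → ℝ) (hne : S.Nonempty) : median a ≤ S.sup' hne a := by
  obtain ⟨i, hiS, hi⟩ := exists_median_le hS a
  exact hi.trans (Finset.le_sup' a hiS)

lemma median_eq_inf_sup (a : Fin (2 * m + 1) → ℝ) :
    median a = (Finset.univ.powersetCard (m + 1)).attach.inf'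
      (Finset.attach_nonempty_iff.2 (Finset.powersetCard_nonempty.2
        (by simp [Finset.card_univ]; omega)))
      (fun S => S.1.sup' (Finset.card_pos.1 (by
        rw [(Finset.mem_powersetCard.1 S.2).2]; omega)) a) := by
  apply le_antisymm
  · apply Finset.le_inf'
    intro S _
    exact median_le_of_card (Finset.mem_powersetCard.1 S.2).2 a _
  · set τ := Tuple.sort a with hτ
    have hmono := Tuple.monotone_sort a
    have h1 : median a = a (τ ⟨m, by omega⟩) := median_eq_of_monotone a τ hmono
    set S₀ : Finset (Fin (2 * m + 1)) := (Finset.Iic (⟨m, by omega⟩ : Fin (2 * m + 1))).image τ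
      with hS₀
    have hcard : S₀.card = m + 1 := by
      rw [hS₀, Finset.card_image_of_injective _ τ.injective, Fin.card_Iic]
    have hmem : S₀ ∈ Finset.univ.powersetCard (m + 1) :=
      Finset.mem_powersetCard.2 ⟨Finset.subset_univ _, hcard⟩
    refine le_trans (Finset.inf'_le _ (Finset.mem_attach _ ⟨S₀, hmem⟩)) ?_
    apply Finset.sup'_le
    intro i hi
    obtain ⟨j, hj, rfl⟩ := Finset.mem_image.1 hi
    rw [h1]
    exact hmono (Finset.mem_Iic.1 hj)

lemma measurable_inf'_aux {δ : Type*} [MeasurableSpace δ] {ι : Type*} {s : Finset ι}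
    (hs : s.Nonempty) {f : ι → δ → ℝ} (hf : ∀ n ∈ s, Measurable (f n)) :
    Measurable (s.inf' hs f) :=
  Finset.inf'_induction hs _ (fun _f hf _g hg => hf.inf hg) hf

lemma measurable_median : Measurable (median : (Fin (2 * m + 1) → ℝ) → ℝ) := by
  have : (median : (Fin (2 * m + 1) → ℝ) → ℝ) = fun a =>
      (Finset.univ.powersetCard (m + 1)).attach.inf'
        (Finset.attach_nonempty_iff.2 (Finset.powersetCard_nonempty.2
          (by simp [Finset.card_univ]; omega)))
        (fun S => S.1.sup' (Finset.card_pos.1 (by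
          rw [(Finset.mem_powersetCard.1 S.2).2]; omega)) a) := by
    funext a
    exact median_eq_inf_sup a
  rw [this]
  have key : Measurable ((Finset.univ.powersetCard (m + 1)).attach.inf'
      (Finset.attach_nonempty_iff.2 (Finset.powersetCard_nonempty.2
        (by simp [Finset.card_univ]; omega)))
      (fun S => S.1.sup' (Finset.card_pos.1 (by
        rw [(Finset.mem_powersetCard.1 S.2).2]; omega))
        (fun i (a : Fin (2 * m + 1) → ℝ) => a i))) :=
    measurable_inf'_aux _ (fun S _ => Finset.measurable_sup' _ (fun n _ => measurable_pi_apply n))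
  convert key using 1
  funext a
  simp only [Finset.inf'_apply, Finset.sup'_apply]

end MedianAux

/-! ### Gaussian integrability -/

lemma integrable_id_gaussianReal (μ : ℝ) (v : ℝ≥0) :
    Integrable (fun x => x) (gaussianReal μ v) := by
  by_cases hv : v = 0
  · subst hv
    rw [gaussianReal_zero_var]
    exact (integrable_const μ).congr (ae_eq_dirac (fun x : ℝ => x)).symm
  · rw [gaussianReal_of_var_ne_zero _ hv,
      integrable_withDensity_iff (measurable_gaussianPDF _ _)
        (ae_of_all _ fun x => ENNReal.ofReal_lt_top)]
    have hpdf : ∀ x : ℝ, (gaussianPDF μ v x).toReal = gaussianPDFReal μ v x := fun x =>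
      ENNReal.toReal_ofReal (gaussianPDFReal_nonneg _ _ _)
    simp only [hpdf, gaussianPDFReal]
    have hb : (0 : ℝ) < (2 * (v : ℝ))⁻¹ := by positivity
    have hint : Integrable (fun t : ℝ => (t + μ) * rexp (-(2 * (v : ℝ))⁻¹ * t ^ 2)) := by
      have h1 : Integrable (fun t : ℝ => t * rexp (-(2 * (v : ℝ))⁻¹ * t ^ 2)) := by
        have := integrable_rpow_mul_exp_neg_mul_sq hb (by norm_num : (-1 : ℝ) < 1)
        simpa using this
      have h2 : Integrable (fun t : ℝ => μ * rexp (-(2 * (v : ℝ))⁻¹ * t ^ 2)) :=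
        (integrable_exp_neg_mul_sq hb).const_mul μ
      simpa [add_mul, Pi.add_def] using h1.add h2
    have hint2 := (hint.comp_sub_right μ).const_mul (√(2 * π * (v : ℝ)))⁻¹
    refine hint2.congr ?_
    apply ae_of_all
    intro x
    have : -(2 * (v : ℝ))⁻¹ * (x - μ) ^ 2 = -(x - μ) ^ 2 / (2 * (v : ℝ)) := by
      field_simp
    simp only [Function.comp]
    rw [this]
    ring

/-! ### CountSketch auxiliary definitions -/

namespace CSAux

variable {k U w : ℕ}

def csEquiv (k U w : ℕ) : CSIdx k U w ≃ (Fin k × Fin U) ⊕ (Fin k × Fin U) ⊕ (Fin k × Fin w) where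
  toFun i := match i with
    | .hash r y => Sum.inl (r, y)
    | .sign r y => Sum.inr (Sum.inl (r, y))
    | .noise r c => Sum.inr (Sum.inr (r, c))
  invFun s := match s with
    | Sum.inl (r, y) => .hash r y
    | Sum.inr (Sum.inl (r, y)) => .sign r y
    | Sum.inr (Sum.inr (r, c)) => .noise r c
  left_inv i := by cases i <;> rfl
  right_inv s := by rcases s with ⟨r, y⟩ | ⟨r, y⟩ | ⟨r, c⟩ <;> rfl

noncomputable instance : Fintype (CSIdx k U w) := Fintype.ofEquiv _ (csEquiv k U w).symm

def hval (v : ∀ i : CSIdx k U w, i.codomain) (r : Fin k) (y : Fin U) : Fin w := v (.hash r y)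
def sval (v : ∀ i : CSIdx k U w, i.codomain) (r : Fin k) (y : Fin U) : ℝ := v (.sign r y)
def nval (v : ∀ i : CSIdx k U w, i.codomain) (r : Fin k) (c : Fin w) : ℝ := v (.noise r c)

/-- The sign-flip map at item `x`. -/
def flip (x : Fin U) (i : CSIdx k U w) : i.codomain → i.codomain :=
  match i with
  | .hash _ _ => id
  | .sign _ y => fun (t : ℝ) => if y = x then -t else t
  | .noise _ _ => id

lemma measurable_flip (x : Fin U) (i : CSIdx k U w) : Measurable (flip x i) := by
  cases i with
  | hash r y => exact measurable_id
  | sign r y =>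
    show Measurable (fun t : ℝ => if y = x then -t else t)
    by_cases hy : y = x
    · simpa [hy] using measurable_neg
    · simpa [hy] using measurable_id'
  | noise r c => exact measurable_id

/-- The estimate as a function of a full sample point. -/
noncomputable def estF (m : ℕ) {U w : ℕ} (f : Fin U → ℤ) (x : Fin U)
    (v : ∀ i : CSIdx (2 * m + 1) U w, i.codomain) : ℝ :=
  median (fun r => sval v r x * ((∑ y : Fin U, (f y : ℝ) * sval v r y *
      (if hval v r y = hval v r x then (1 : ℝ) else 0))
    + ∑ c : Fin w, if hval v r x = c then nval v r c else 0))

lemma measurable_estF (m : ℕ) {U w : ℕ} (f : Fin U → ℤ) (x : Fin U) :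
    Measurable (estF m (w := w) f x) := by
  apply MedianAux.measurable_median.comp
  apply measurable_pi_lambda
  intro r
  apply Measurable.mul
  · exact measurable_pi_apply _
  apply Measurable.add
  · apply Finset.measurable_sum
    intro y _
    apply Measurable.mul
    · exact measurable_const.mul (measurable_pi_apply _)
    · refine Measurable.ite ?_ measurable_const measurable_const
      exact measurableSet_eq_fun (measurable_pi_apply _) (measurable_pi_apply _)
  · apply Finset.measurable_sum
    intro c _
    refine Measurable.ite ?_ (measurable_pi_apply _) measurable_const
    exact measurableSet_eq_fun (measurable_pi_apply _) measurable_const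

lemma estF_flip (m : ℕ) {U w : ℕ} (f : Fin U → ℤ) (x : Fin U)
    (v : ∀ i : CSIdx (2 * m + 1) U w, i.codomain)
    (hs : ∀ r, sval v r x = 1 ∨ sval v r x = -1) :
    estF m f x (fun i => flip x i (v i)) = 2 * (f x : ℝ) - estF m f x v := by
  have hval_flip : ∀ r y, hval (fun i => flip x i (v i)) r y = hval v r y := fun _ _ => rfl
  have nval_flip : ∀ r c, nval (fun i => flip x i (v i)) r c = nval v r c := fun _ _ => rfl
  have sval_flip : ∀ r y, sval (fun i => flip x i (v i)) r y
      = if y = x then -(sval v r y) else sval v r y := by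
    intro r y
    show (if y = x then -(sval v r y) else sval v r y) = _
    rfl
  have key : (fun r => sval (fun i => flip x i (v i)) r x *
        ((∑ y : Fin U, (f y : ℝ) * sval (fun i => flip x i (v i)) r y *
          (if hval (fun i => flip x i (v i)) r y = hval (fun i => flip x i (v i)) r x
            then (1 : ℝ) else 0))
        + ∑ c : Fin w, if hval (fun i => flip x i (v i)) r x = c
            then nval (fun i => flip x i (v i)) r c else 0))
      = fun r => 2 * (f x : ℝ) + -(sval v r x *
        ((∑ y : Fin U, (f y : ℝ) * sval v r y *
          (if hval v r y = hval v r x then (1 : ℝ) else 0))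
        + ∑ c : Fin w, if hval v r x = c then nval v r c else 0)) := by
    funext r
    simp only [sval_flip, hval_flip, nval_flip, eq_self_iff_true, if_true]
    have hsum : (∑ y : Fin U, (f y : ℝ) * (if y = x then -(sval v r y) else sval v r y) *
        (if hval v r y = hval v r x then (1 : ℝ) else 0))
        = (∑ y : Fin U, (f y : ℝ) * sval v r y *
            (if hval v r y = hval v r x then (1 : ℝ) else 0))
          - 2 * ((f x : ℝ) * sval v r x) := by
      have hterm : ∀ y : Fin U, (f y : ℝ) * (if y = x then -(sval v r y) else sval v r y) *
          (if hval v r y = hval v r x then (1 : ℝ) else 0)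
          = (f y : ℝ) * sval v r y * (if hval v r y = hval v r x then (1 : ℝ) else 0)
            - 2 * (if y = x then (f y : ℝ) * sval v r y *
              (if hval v r y = hval v r x then (1 : ℝ) else 0) else 0) := by
        intro y
        by_cases hy : y = x <;> simp [hy] <;> ring
      rw [Finset.sum_congr rfl (fun y _ => hterm y), Finset.sum_sub_distrib, ← Finset.mul_sum,
        Finset.sum_ite_eq' Finset.univ x]
      simp
    rw [hsum]
    rcases hs r with h1 | h1 <;> rw [h1] <;> ring
  unfold estF
  rw [key, MedianAux.median_const_add, MedianAux.median_neg]
  ring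

/-- If a finite family of random variables is independent, the law of the combined map is the
product of the marginal laws. -/
lemma map_eq_pi {Ω : Type*} [MeasurableSpace Ω] (P : Measure Ω) [IsProbabilityMeasure P]
    {ι : Type*} [Fintype ι] {β : ι → Type*} [∀ i, MeasurableSpace (β i)]
    (X : ∀ i, Ω → β i) (hX : ∀ i, Measurable (X i))
    (hindep : iIndepFun X P) :
    Measure.map (fun ω i => X i ω) P = Measure.pi (fun i => Measure.map (X i) P) := by
  haveI : ∀ i, IsProbabilityMeasure (Measure.map (X i) P) :=
    fun i => Measure.isProbabilityMeasure_map (hX i).aemeasurable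
  symm
  apply Measure.pi_eq
  intro s hs
  rw [Measure.map_apply (measurable_pi_lambda _ hX) (MeasurableSet.univ_pi hs)]
  have hpre : (fun ω i => X i ω) ⁻¹' Set.pi Set.univ s = ⋂ i ∈ Finset.univ, X i ⁻¹' s i := by
    ext ω
    simp [Set.mem_pi]
  rw [hpre, hindep.measure_inter_preimage_eq_mul Finset.univ (fun i _ => hs i)]
  exact Finset.prod_congr rfl fun i _ => (Measure.map_apply (hX i) (hs i)).symm

end CSAux

/-- The private CountSketch frequency estimate, built from fully random hashes
uniform on `Fin w`, fully random signs uniform on `{-1,+1}`, and independent `N(0,σ²)` noise,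
all mutually independent, is unbiased: `E[f̂(x)] = f(x)`. -/
theorem stmt4 {Ω : Type*} [MeasurableSpace Ω] (P : Measure Ω) [IsProbabilityMeasure P]
    (m U w : ℕ) (hU : 1 ≤ U) (hw : 1 ≤ w)
    (f : Fin U → ℤ) (σ : ℝ) (hσ : 0 ≤ σ) (x : Fin U)
    (h : Fin (2 * m + 1) → Fin U → Ω → Fin w)
    (g : Fin (2 * m + 1) → Fin U → Ω → ℝ)
    (η : Fin (2 * m + 1) → Fin w → Ω → ℝ)
    (hmeas : ∀ i : CSIdx (2 * m + 1) U w, Measurable (CSVars h g η i))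
    (hindep : iIndepFun (CSVars h g η) P)
    (hdisth : ∀ r y, Measure.map (h r y) P = (w : ℝ≥0∞)⁻¹ • Measure.count)
    (hdistg : ∀ r y, Measure.map (g r y) P
      = (2 : ℝ≥0∞)⁻¹ • (Measure.dirac (1 : ℝ) + Measure.dirac (-1 : ℝ)))
    (hdistη : ∀ r c, Measure.map (η r c) P = gaussianReal 0 ⟨σ ^ 2, sq_nonneg σ⟩)
    (fhat : Ω → ℝ)
    (hfh : ∀ ω, fhat ω = median (fun r =>
      g r x ω * ((∑ y : Fin U, (f y : ℝ) * g r y ω * (if h r y ω = h r x ω then 1 else 0))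
        + η r (h r x ω) ω))) :
    ∫ ω, fhat ω ∂P = (f x : ℝ) := by
  classical
  set X := CSVars h g η with hX
  set Φ : Ω → ∀ i : CSIdx (2 * m + 1) U w, i.codomain := fun ω i => X i ω with hΦdef
  have hΦ : Measurable Φ := measurable_pi_lambda _ hmeas
  -- flipped family
  set X' : ∀ i : CSIdx (2 * m + 1) U w, Ω → i.codomain :=
    fun i ω => CSAux.flip x i (X i ω) with hX'
  set Φ' : Ω → ∀ i : CSIdx (2 * m + 1) U w, i.codomain := fun ω i => X' i ω with hΦ'def
  have hmeas' : ∀ i, Measurable (X' i) := fun i => (CSAux.measurable_flip x i).comp (hmeas i)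
  have hΦ' : Measurable Φ' := measurable_pi_lambda _ hmeas'
  have hindep' : iIndepFun X' P :=
    hindep.comp (fun i => CSAux.flip x i) (CSAux.measurable_flip x)
  -- marginals of flipped family agree
  have hmarg : ∀ i, Measure.map (X' i) P = Measure.map (X i) P := by
    intro i
    cases i with
    | hash r y => rfl
    | noise r c => rfl
    | sign r y =>
      by_cases hy : y = x
      · have hg : Measurable (g r y) := hmeas (.sign r y)
        have h1 : X' (.sign r y) = Neg.neg ∘ (g r y) := by
          funext ω
          show (if y = x then -(g r y ω) else g r y ω) = -(g r y ω)
          rw [if_pos hy]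
        calc (Measure.map (X' (.sign r y)) P : Measure ℝ)
            = Measure.map (Neg.neg ∘ (g r y)) P := by rw [h1]
          _ = Measure.map Neg.neg (Measure.map (g r y) P) :=
              (Measure.map_map measurable_neg hg).symm
          _ = Measure.map Neg.neg
              ((2 : ℝ≥0∞)⁻¹ • (Measure.dirac (1 : ℝ) + Measure.dirac (-1 : ℝ))) := by
              rw [hdistg r y]
          _ = (2 : ℝ≥0∞)⁻¹ • (Measure.dirac (-1 : ℝ) + Measure.dirac (1 : ℝ)) := by
              rw [Measure.map_smul, Measure.map_add _ _ measurable_neg,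
                Measure.map_dirac' measurable_neg, Measure.map_dirac' measurable_neg]
              norm_num
          _ = (Measure.map (X (.sign r y)) P : Measure ℝ) := by
              have h2 : Measure.map (X (CSIdx.sign r y)) P
                  = (2 : ℝ≥0∞)⁻¹ • (Measure.dirac (1 : ℝ) + Measure.dirac (-1 : ℝ)) :=
                hdistg r y
              exact (h2.trans (congrArg (fun μ => (2 : ℝ≥0∞)⁻¹ • μ) (add_comm _ _))).symm
      · have h1 : X' (.sign r y) = X (.sign r y) := by
          funext ω
          show (if y = x then -(g r y ω) else g r y ω) = g r y ω
          rw [if_neg hy]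
        rw [h1]
  -- equal joint laws
  have hmapeq : Measure.map Φ' P = Measure.map Φ P := by
    rw [hΦ'def, hΦdef, CSAux.map_eq_pi P X' hmeas' hindep', CSAux.map_eq_pi P X hmeas hindep]
    congr 1
    funext i
    exact hmarg i
  -- fhat = estF ∘ Φ
  have hcompΦ : ∀ ω, CSAux.estF m f x (Φ ω) = fhat ω := by
    intro ω
    rw [hfh ω]
    unfold CSAux.estF
    congr 1
    funext r
    have hsv : ∀ y, CSAux.sval (Φ ω) r y = g r y ω := fun _ => rfl
    have hhv : ∀ y, CSAux.hval (Φ ω) r y = h r y ω := fun _ => rfl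
    have hnv : ∀ c, CSAux.nval (Φ ω) r c = η r c ω := fun _ => rfl
    simp only [hsv, hhv, hnv]
    congr 1
    congr 1
    rw [Finset.sum_ite_eq Finset.univ (h r x ω) (fun c => η r c ω)]
    simp
  -- a.e. the signs are ±1
  have hsign : ∀ᵐ ω ∂P, ∀ r y, g r y ω = 1 ∨ g r y ω = -1 := by
    rw [ae_all_iff]
    intro r
    rw [ae_all_iff]
    intro y
    have hmg : Measurable (g r y) := hmeas (.sign r y)
    have hset : MeasurableSet (({1, -1} : Set ℝ)ᶜ) :=
      ((Set.finite_singleton (-1 : ℝ)).insert 1).measurableSet.compl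
    have h0 : P (g r y ⁻¹' (({1, -1} : Set ℝ)ᶜ)) = 0 := by
      rw [← Measure.map_apply hmg hset, hdistg r y]
      rw [Measure.smul_apply, Measure.coe_add, Pi.add_apply,
        Measure.dirac_apply' _ hset, Measure.dirac_apply' _ hset]
      simp [Set.indicator_apply]
    rw [ae_iff]
    have hseteq : {ω | ¬(g r y ω = 1 ∨ g r y ω = -1)} = g r y ⁻¹' (({1, -1} : Set ℝ)ᶜ) := by
      ext ω
      simp only [Set.mem_setOf_eq, Set.mem_preimage, Set.mem_compl_iff, Set.mem_insert_iff,
        Set.mem_singleton_iff]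
    rw [hseteq]
    exact h0
  -- integrability of fhat
  have hηint : ∀ r c, Integrable (η r c) P := by
    intro r c
    have hm : Measurable (η r c) := hmeas (.noise r c)
    have hi : Integrable (fun t : ℝ => t) (Measure.map (η r c) P) := by
      rw [hdistη r c]
      exact integrable_id_gaussianReal 0 _
    exact (integrable_map_measure aestronglyMeasurable_id hm.aemeasurable).mp hi
  have hfhat_meas : Measurable fhat := by
    have : fhat = fun ω => CSAux.estF m f x (Φ ω) := funext fun ω => (hcompΦ ω).symm
    rw [this]
    exact (CSAux.measurable_estF m f x).comp hΦ
  set B : Ω → ℝ := fun ω => ∑ r : Fin (2 * m + 1),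
      ((∑ y : Fin U, |(f y : ℝ)|) + ∑ c : Fin w, |η r c ω|) with hB
  have hBint : Integrable B P := by
    apply integrable_finset_sum
    intro r _
    exact (integrable_const _).add (integrable_finset_sum _ fun c _ => (hηint r c).abs)
  have hbound : ∀ᵐ ω ∂P, ‖fhat ω‖ ≤ B ω := by
    filter_upwards [hsign] with ω hω
    have habs : ∀ r y', |g r y' ω| = 1 := by
      intro r y'
      rcases hω r y' with h1 | h1 <;> simp [h1]
    rw [hfh ω]
    obtain ⟨r₀, hr₀⟩ := MedianAux.exists_median_eq (fun r =>
      g r x ω * ((∑ y : Fin U, (f y : ℝ) * g r y ω * (if h r y ω = h r x ω then 1 else 0))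
        + η r (h r x ω) ω))
    rw [hr₀]
    have hS : |∑ y : Fin U, (f y : ℝ) * g r₀ y ω * (if h r₀ y ω = h r₀ x ω then (1:ℝ) else 0)|
        ≤ ∑ y : Fin U, |(f y : ℝ)| := by
      refine (Finset.abs_sum_le_sum_abs _ _).trans (Finset.sum_le_sum fun y _ => ?_)
      rw [abs_mul, abs_mul, habs r₀ y, mul_one]
      have hite : |(if h r₀ y ω = h r₀ x ω then (1:ℝ) else 0)| ≤ 1 := by
        split <;> simp
      calc |(f y : ℝ)| * |(if h r₀ y ω = h r₀ x ω then (1:ℝ) else 0)|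
          ≤ |(f y : ℝ)| * 1 := mul_le_mul_of_nonneg_left hite (abs_nonneg _)
        _ = |(f y : ℝ)| := mul_one _
    have hNb : |η r₀ (h r₀ x ω) ω| ≤ ∑ c : Fin w, |η r₀ c ω| :=
      Finset.single_le_sum (f := fun c => |η r₀ c ω|) (fun c _ => abs_nonneg _)
        (Finset.mem_univ _)
    calc ‖g r₀ x ω * ((∑ y : Fin U, (f y : ℝ) * g r₀ y ω *
            (if h r₀ y ω = h r₀ x ω then 1 else 0)) + η r₀ (h r₀ x ω) ω)‖
        = |g r₀ x ω| * |(∑ y : Fin U, (f y : ℝ) * g r₀ y ω *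
            (if h r₀ y ω = h r₀ x ω then 1 else 0)) + η r₀ (h r₀ x ω) ω| := by
          rw [Real.norm_eq_abs, abs_mul]
      _ = |(∑ y : Fin U, (f y : ℝ) * g r₀ y ω *
            (if h r₀ y ω = h r₀ x ω then 1 else 0)) + η r₀ (h r₀ x ω) ω| := by
          rw [habs, one_mul]
      _ ≤ |∑ y : Fin U, (f y : ℝ) * g r₀ y ω * (if h r₀ y ω = h r₀ x ω then 1 else 0)|
            + |η r₀ (h r₀ x ω) ω| := abs_add_le _ _
      _ ≤ (∑ y : Fin U, |(f y : ℝ)|) + ∑ c : Fin w, |η r₀ c ω| := add_le_add hS hNb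
      _ ≤ B ω := by
          simp only [hB]
          exact Finset.single_le_sum
            (f := fun r => (∑ y : Fin U, |(f y : ℝ)|) + ∑ c : Fin w, |η r c ω|)
            (fun r _ => by positivity) (Finset.mem_univ r₀)
  have hfhat_int : Integrable fhat P :=
    Integrable.mono' hBint hfhat_meas.aestronglyMeasurable hbound
  -- change of variables, symmetry
  have hEstF := CSAux.measurable_estF (w := w) m f x
  have hint_eq : ∫ ω, CSAux.estF m f x (Φ' ω) ∂P = ∫ ω, CSAux.estF m f x (Φ ω) ∂P := by
    rw [← integral_map hΦ'.aemeasurable hEstF.aestronglyMeasurable,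
      ← integral_map hΦ.aemeasurable hEstF.aestronglyMeasurable, hmapeq]
  have hflip_ae : ∀ᵐ ω ∂P, CSAux.estF m f x (Φ' ω) = 2 * (f x : ℝ) - fhat ω := by
    filter_upwards [hsign] with ω hω
    have hΦ'ω : Φ' ω = fun i => CSAux.flip x i (Φ ω i) := rfl
    rw [hΦ'ω, CSAux.estF_flip m f x (Φ ω) (fun r => hω r x), hcompΦ ω]
  have h1 : ∫ ω, CSAux.estF m f x (Φ' ω) ∂P = ∫ ω, (2 * (f x : ℝ) - fhat ω) ∂P :=
    integral_congr_ae hflip_ae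
  have h2 : ∫ ω, (2 * (f x : ℝ) - fhat ω) ∂P = 2 * (f x : ℝ) - ∫ ω, fhat ω ∂P := by
    rw [integral_sub (integrable_const _) hfhat_int, integral_const]
    simp
  have h3 : ∫ ω, CSAux.estF m f x (Φ ω) ∂P = ∫ ω, fhat ω ∂P :=
    integral_congr_ae (ae_of_all _ fun ω => hcompΦ ω)
  rw [h1, h2, h3] at hint_eq
  linarith
end

section
/- Let U, w ≥ 1, let k = 2m+1 be odd, let f : Fin U → ℤ, let σ ≥ 0, and fix an item x ∈ Fin U. Suppose the random variables (h_r(y))_{r ∈ Fin k, y ∈ Fin U} are i.i.d. uniform on Fin w, the random variables (g_r(y))_{r ∈ Fin k, y ∈ Fin U} are i.i.d. uniform on {−1,+1}, the random variables (η[r,c])_{r ∈ Fin k, c ∈ Fin w} are i.i.d. N(0, σ²), and these three families are mutually independent. Define the private CountSketch estimate f̂(x) = median_{r ∈ Fin k} g_r(x)·( Σ_{y ∈ Fin U} f(y)·g_r(y)·1{h_r(y) = h_r(x)} + η[r, h_r(x)] ). Then the law of f̂(x) − f(x) is symmetric about 0: the pushforward of the distribution of f̂(x) − f(x) under the map t ↦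 −t equals that distribution. -/
open MeasureTheory ProbabilityTheory Real
open scoped ENNReal NNReal

section Aux

/-! ### Auxiliary lemmas about the median -/

lemma sorted_get_mono {l : List ℝ} (hs : l.Pairwise (· ≤ ·)) {i j : ℕ} (hij : i ≤ j)
    (hj : j < l.length) : l[i]'(lt_of_le_of_lt hij hj) ≤ l[j] := by
  rcases eq_or_lt_of_le hij with rfl | hlt
  · exact le_rfl
  · exact List.Pairwise.rel_get_of_lt hs (a := ⟨i, lt_of_le_of_lt hij hj⟩) (b := ⟨j, hj⟩)
      (by simpa [Fin.lt_def] using hlt)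

lemma sorted_getElem_le_iff {l : List ℝ} (hs : l.Pairwise (· ≤ ·)) {i : ℕ} (hi : i < l.length)
    (t : ℝ) : l[i] ≤ t ↔ i + 1 ≤ l.countP (fun x => decide (x ≤ t)) := by
  constructor
  · intro hle
    have h2 : l.countP (fun x => decide (x ≤ t))
        = (l.take (i+1)).countP (fun x => decide (x ≤ t))
          + (l.drop (i+1)).countP (fun x => decide (x ≤ t)) := by
      conv_lhs => rw [(List.take_append_drop (i+1) l).symm]
      rw [List.countP_append]
    have h3 : (l.take (i+1)).countP (fun x => decide (x ≤ t)) = (l.take (i+1)).length := by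
      rw [List.countP_eq_length]
      intro x hx
      obtain ⟨j, hj, rfl⟩ := List.mem_iff_getElem.mp hx
      have hj' : j ≤ i := by simp [List.length_take] at hj; omega
      rw [List.getElem_take]
      simp only [decide_eq_true_eq]
      exact (sorted_get_mono hs hj' hi).trans hle
    rw [h2, h3, List.length_take]
    omega
  · intro hcount
    by_contra hgt
    push_neg at hgt
    have h2 : l.countP (fun x => decide (x ≤ t))
        = (l.take i).countP (fun x => decide (x ≤ t))
          + (l.drop i).countP (fun x => decide (x ≤ t)) := by
      conv_lhs => rw [(List.take_append_drop i l).symm]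
      rw [List.countP_append]
    have h3 : (l.drop i).countP (fun x => decide (x ≤ t)) = 0 := by
      rw [List.countP_eq_zero]
      intro x hx
      obtain ⟨j, hj, rfl⟩ := List.mem_iff_getElem.mp hx
      have hj2 : i + j < l.length := by simp [List.length_drop] at hj; omega
      rw [List.getElem_drop]
      simp only [decide_eq_true_eq]
      intro hc
      exact absurd ((sorted_get_mono hs (Nat.le_add_right i j) hj2).trans hc)
        (not_le.mpr hgt)
    have h4 : (l.take i).countP (fun x => decide (x ≤ t)) ≤ i := by
      calc _ ≤ (l.take i).length := List.countP_le_length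
        _ ≤ i := by simp [List.length_take]
    omega

lemma median_le_iff {m : ℕ} (a : Fin (2 * m + 1) → ℝ) (t : ℝ) :
    median a ≤ t ↔ m + 1 ≤ (Finset.univ.filter (fun r => a r ≤ t)).card := by
  set l := Multiset.sort (Multiset.map a Finset.univ.val) (· ≤ ·) with hl
  have hlen : l.length = 2 * m + 1 := by simp [hl, Multiset.length_sort]
  have hsort : l.Pairwise (· ≤ ·) := Multiset.pairwise_sort _ _
  have hcount : l.countP (fun x => decide (x ≤ t))
      = (Finset.univ.filter (fun r => a r ≤ t)).card := by
    rw [← Multiset.coe_countP, hl, Multiset.sort_eq, Multiset.countP_map]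
    simp only [Finset.card_def, Finset.filter_val]
  rw [show median a = l[m]'(by omega) from rfl, sorted_getElem_le_iff hsort (by omega) t, hcount]

lemma measurable_median {m : ℕ} : Measurable (median (m := m)) := by
  apply measurable_of_Iic
  intro t
  have : median (m := m) ⁻¹' Set.Iic t
      = ⋃ (S : Finset (Fin (2 * m + 1))) (_ : S.card = m + 1), ⋂ r ∈ S, {a | a r ≤ t} := by
    ext a
    simp only [Set.mem_preimage, Set.mem_Iic, median_le_iff, Set.mem_iUnion, Set.mem_iInter,
      Set.mem_setOf_eq]
    constructor
    · intro hc
      obtain ⟨S, hS, hcard⟩ := Finset.exists_subset_card_eq hc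
      exact ⟨S, hcard, fun r hr => (Finset.mem_filter.mp (hS hr)).2⟩
    · rintro ⟨S, hcard, hS⟩
      calc m + 1 = S.card := hcard.symm
        _ ≤ _ := Finset.card_le_card (fun r hr => Finset.mem_filter.mpr ⟨Finset.mem_univ r, hS r hr⟩)
  rw [this]
  exact MeasurableSet.iUnion fun S => MeasurableSet.iUnion fun _ =>
    MeasurableSet.biInter (Set.to_countable _)
      (fun r _ => measurableSet_le (measurable_pi_apply r) measurable_const)

lemma median_antitone_comp {m : ℕ} (φ : ℝ → ℝ) (hφ : Antitone φ) (a : Fin (2 * m + 1) → ℝ) :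
    median (fun r => φ (a r)) = φ (median a) := by
  set l := Multiset.sort (Multiset.map a Finset.univ.val) (· ≤ ·) with hl
  have hlen : l.length = 2 * m + 1 := by simp [hl, Multiset.length_sort]
  have hsort : l.Pairwise (· ≤ ·) := Multiset.pairwise_sort _ _
  have hco : (Multiset.map (fun r => φ (a r)) Finset.univ.val)
      = ((l.map φ).reverse : List ℝ) := by
    have h2 : (Multiset.map (fun r => φ (a r)) Finset.univ.val)
        = Multiset.map φ (Multiset.map a Finset.univ.val) := by
      rw [Multiset.map_map]; rfl
    rw [h2, show (Multiset.map a Finset.univ.val) = ((l : List ℝ) : Multiset ℝ) from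
      (Multiset.sort_eq _ _).symm]
    rw [show (Multiset.map φ ((l : List ℝ) : Multiset ℝ)) = ((l.map φ : List ℝ) : Multiset ℝ)
      from rfl]
    exact Multiset.coe_eq_coe.mpr (List.reverse_perm _).symm
  have hkey : Multiset.sort (Multiset.map (fun r => φ (a r)) Finset.univ.val) (· ≤ ·)
      = (l.map φ).reverse := by
    apply List.Perm.eq_of_pairwise'
      (l₂ := (l.map φ).reverse) (Multiset.pairwise_sort _ _) ?_ ?_
    · rw [List.pairwise_reverse]
      exact List.Pairwise.map φ (fun x y hxy => hφ hxy) hsort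
    · exact Multiset.coe_eq_coe.mp ((Multiset.sort_eq _ _).trans hco)
  have hm : median (fun r => φ (a r)) = ((l.map φ).reverse)[m]'(by
      simp [hlen]; omega) := by
    simp only [median, hkey]
  rw [hm, List.getElem_reverse]
  have hidx : (l.map φ).length - 1 - m = m := by simp [hlen]; omega
  simp only [hidx, List.getElem_map]
  rfl

/-! ### Independence gives product law -/

lemma map_joint_eq_pi {ι : Type*} [Fintype ι] {κ : ι → Type*} [mκ : ∀ i, MeasurableSpace (κ i)]
    {Ω : Type*} [MeasurableSpace Ω] {P : Measure Ω} [IsProbabilityMeasure P]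
    {F : ∀ i, Ω → κ i} (hmeas : ∀ i, Measurable (F i))
    (hind : iIndepFun F P) :
    Measure.map (fun ω i => F i ω) P = Measure.pi (fun i => Measure.map (F i) P) := by
  haveI : ∀ i, IsProbabilityMeasure (Measure.map (F i) P) :=
    fun i => Measure.isProbabilityMeasure_map (hmeas i).aemeasurable
  symm
  apply Measure.pi_eq
  intro s hs
  rw [Measure.map_apply (measurable_pi_lambda _ hmeas) (MeasurableSet.univ_pi hs)]
  have hpre : (fun ω i => F i ω) ⁻¹' Set.pi Set.univ s = ⋂ i, F i ⁻¹' s i := by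
    ext ω; simp [Set.mem_pi]
  rw [hpre, hind.meas_iInter (fun i => ⟨s i, hs i, rfl⟩)]
  exact Finset.prod_congr rfl fun i _ => (Measure.map_apply (hmeas i) (hs i)).symm

/-- `CSIdx` is a finite type. -/
def csEquiv (k U w : ℕ) : CSIdx k U w ≃ (Fin k × Fin U) ⊕ (Fin k × Fin U) ⊕ (Fin k × Fin w) where
  toFun i := match i with
    | .hash r y => .inl (r, y)
    | .sign r y => .inr (.inl (r, y))
    | .noise r c => .inr (.inr (r, c))
  invFun s := match s with
    | .inl (r, y) => .hash r y
    | .inr (.inl (r, y)) => .sign r y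
    | .inr (.inr (r, c)) => .noise r c
  left_inv i := by cases i <;> rfl
  right_inv s := by rcases s with ⟨r, y⟩ | ⟨r, y⟩ | ⟨r, c⟩ <;> rfl

noncomputable instance {k U w : ℕ} : Fintype (CSIdx k U w) :=
  Fintype.ofEquiv _ (csEquiv k U w).symm

end Aux

/-- The private CountSketch frequency estimate, built from fully random hashes
uniform on `Fin w`, fully random signs uniform on `{-1,+1}`, and independent `N(0,σ²)` noise,
all mutually independent, has a law symmetric about `f(x)`: the distribution of
`f̂(x) - f(x)` is invariant under `t ↦ -t`. -/
theorem stmt5 {Ω : Type*} [MeasurableSpace Ω] (P : Measure Ω) [IsProbabilityMeasure P]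
    (m U w : ℕ) (hU : 1 ≤ U) (hw : 1 ≤ w)
    (f : Fin U → ℤ) (σ : ℝ) (hσ : 0 ≤ σ) (x : Fin U)
    (h : Fin (2 * m + 1) → Fin U → Ω → Fin w)
    (g : Fin (2 * m + 1) → Fin U → Ω → ℝ)
    (η : Fin (2 * m + 1) → Fin w → Ω → ℝ)
    (hmeas : ∀ i : CSIdx (2 * m + 1) U w, Measurable (CSVars h g η i))
    (hindep : iIndepFun (CSVars h g η) P)
    (hdisth : ∀ r y, Measure.map (h r y) P = (w : ℝ≥0∞)⁻¹ • Measure.count)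
    (hdistg : ∀ r y, Measure.map (g r y) P
      = (2 : ℝ≥0∞)⁻¹ • (Measure.dirac (1 : ℝ) + Measure.dirac (-1 : ℝ)))
    (hdistη : ∀ r c, Measure.map (η r c) P = gaussianReal 0 ⟨σ ^ 2, sq_nonneg σ⟩)
    (fhat : Ω → ℝ)
    (hfh : ∀ ω, fhat ω = median (fun r =>
      g r x ω * ((∑ y : Fin U, (f y : ℝ) * g r y ω * (if h r y ω = h r x ω then 1 else 0))
        + η r (h r x ω) ω))) :
    Measure.map (fun t : ℝ => -t) (Measure.map (fun ω => fhat ω - (f x : ℝ)) P)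
      = Measure.map (fun ω => fhat ω - (f x : ℝ)) P := by
  classical
  set c : ℝ := (f x : ℝ) with hc
  set g' : Fin (2 * m + 1) → Fin U → Ω → ℝ :=
    fun r y ω => if y = x then g r y ω else -(g r y ω) with hg'def
  set η' : Fin (2 * m + 1) → Fin w → Ω → ℝ := fun r cc ω => -(η r cc ω) with hη'def
  let T : ∀ i : CSIdx (2 * m + 1) U w, i.codomain → i.codomain := fun i =>
    match i with
    | .hash _ _ => id
    | .sign _ y => fun v : ℝ => if y = x then v else -v
    | .noise _ _ => fun v : ℝ => -v
  have hT : ∀ i, Measurable (T i) := by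
    rintro (⟨r, y⟩ | ⟨r, y⟩ | ⟨r, cc⟩)
    · exact measurable_id
    · by_cases hy : y = x
      · show Measurable (fun v : ℝ => if y = x then v else -v)
        simp only [hy, ↓reduceIte]; exact measurable_id
      · show Measurable (fun v : ℝ => if y = x then v else -v)
        simp only [hy, ↓reduceIte]; exact measurable_neg
    · exact (measurable_neg : Measurable (fun v : ℝ => -v))
  have hTcomp : ∀ i, CSVars h g' η' i = T i ∘ CSVars h g η i := by
    rintro (⟨r, y⟩ | ⟨r, y⟩ | ⟨r, cc⟩) <;> funext ω <;> simp [CSVars, T, hg'def, hη'def] <;> rfl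
  have hmeas' : ∀ i, Measurable (CSVars h g' η' i) := by
    intro i; rw [hTcomp i]; exact (hT i).comp (hmeas i)
  have hindep' : iIndepFun (CSVars h g' η') P := by
    have h2 := hindep.comp T hT
    have heq : CSVars h g' η' = fun i => T i ∘ CSVars h g η i := funext hTcomp
    rw [heq]
    exact h2
  have hmapneg : ∀ (G : Ω → ℝ), Measurable G →
      Measure.map (fun ω => -(G ω)) P = Measure.map (fun v : ℝ => -v) (Measure.map G P) := by
    intro G hG
    rw [Measure.map_map (measurable_neg : Measurable (fun v : ℝ => -v)) hG]
    rfl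
  have hmarg : ∀ i, Measure.map (CSVars h g' η' i) P = Measure.map (CSVars h g η i) P := by
    rintro (⟨r, y⟩ | ⟨r, y⟩ | ⟨r, cc⟩)
    · rfl
    · by_cases hy : y = x
      · have heq : CSVars h g' η' (.sign r y) = CSVars h g η (.sign r y) := by
          funext ω; simp [CSVars, hg'def, hy]; rfl
        rw [heq]
      · have h1 : CSVars h g' η' (.sign r y) = fun ω => -(g r y ω) := by
          funext ω; simp [CSVars, hg'def, hy]; rfl
        rw [h1, show CSVars h g η (.sign r y) = g r y from rfl]
        show Measure.map (fun ω => -(g r y ω)) P = Measure.map (g r y) P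
        rw [hmapneg (g r y) (hmeas (.sign r y) : Measurable (g r y)), hdistg r y,
          Measure.map_smul, Measure.map_add _ _ (measurable_neg : Measurable (fun v : ℝ => -v)),
          Measure.map_dirac' (measurable_neg : Measurable (fun v : ℝ => -v)),
          Measure.map_dirac' (measurable_neg : Measurable (fun v : ℝ => -v))]
        norm_num [add_comm]
    · have h1 : CSVars h g' η' (.noise r cc) = fun ω => -(η r cc ω) := rfl
      rw [h1, show CSVars h g η (.noise r cc) = η r cc from rfl]
      show Measure.map (fun ω => -(η r cc ω)) P = Measure.map (η r cc) P
      rw [hmapneg (η r cc) (hmeas (.noise r cc) : Measurable (η r cc)), hdistη r cc]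
      have h2 : (fun v : ℝ => -v) = ((-1 : ℝ) * ·) := by funext v; ring
      rw [h2]
      refine (gaussianReal_map_const_mul (-1)).trans ?_
      norm_num
      exact congrArg (gaussianReal 0) (one_mul _)
  have hvmeas : Measurable (fun ω i => CSVars h g η i ω) := measurable_pi_lambda _ hmeas
  have hvmeas' : Measurable (fun ω i => CSVars h g' η' i ω) := measurable_pi_lambda _ hmeas'
  have hjoint : Measure.map (fun ω i => CSVars h g' η' i ω) P
      = Measure.map (fun ω i => CSVars h g η i ω) P := by
    rw [map_joint_eq_pi hmeas' hindep', map_joint_eq_pi hmeas hindep]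
    exact congrArg Measure.pi (funext hmarg)
  set Φ : (∀ i : CSIdx (2 * m + 1) U w, i.codomain) → ℝ := fun v =>
    median (fun r => (show ℝ from v (.sign r x)) *
      ((∑ y : Fin U, (f y : ℝ) * (show ℝ from v (.sign r y)) *
        (if (show Fin w from v (.hash r y)) = (show Fin w from v (.hash r x)) then (1 : ℝ) else 0))
        + (show ℝ from v (.noise r (show Fin w from v (.hash r x)))))) - c with hΦdef
  have hhash : ∀ (r : Fin (2 * m + 1)) (y : Fin U) (cc : Fin w), MeasurableSet
      {v : ∀ i : CSIdx (2 * m + 1) U w, i.codomain | (show Fin w from v (.hash r y)) = cc} := by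
    intro r y cc
    have h1 : Measurable (fun v : ∀ i : CSIdx (2 * m + 1) U w, i.codomain =>
        (show Fin w from v (.hash r y))) := measurable_pi_apply (CSIdx.hash r y)
    exact h1 (MeasurableSet.singleton cc)
  have hΦmeas : Measurable Φ := by
    apply Measurable.sub ?_ measurable_const
    apply measurable_median.comp
    apply measurable_pi_lambda
    intro r
    have hsgn : ∀ y : Fin U, Measurable fun v : ∀ i : CSIdx (2 * m + 1) U w, i.codomain =>
        (show ℝ from v (.sign r y)) := fun y => measurable_pi_apply (CSIdx.sign r y)
    have hindset : ∀ y : Fin U, MeasurableSet {v : ∀ i : CSIdx (2 * m + 1) U w, i.codomain |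
        (show Fin w from v (.hash r y)) = (show Fin w from v (.hash r x))} := by
      intro y
      have : {v : ∀ i : CSIdx (2 * m + 1) U w, i.codomain |
          (show Fin w from v (.hash r y)) = (show Fin w from v (.hash r x))}
          = ⋃ cc : Fin w,
            {v : ∀ i : CSIdx (2 * m + 1) U w, i.codomain | (show Fin w from v (.hash r y)) = cc}
            ∩ {v : ∀ i : CSIdx (2 * m + 1) U w, i.codomain |
                (show Fin w from v (.hash r x)) = cc} := by
        ext v
        simp only [Set.mem_setOf_eq, Set.mem_iUnion, Set.mem_inter_iff]
        constructor
        · intro hv; exact ⟨_, hv, rfl⟩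
        · rintro ⟨cc, h1, h2⟩; rw [h1, h2]
      rw [this]
      exact MeasurableSet.iUnion fun cc => (hhash r y cc).inter (hhash r x cc)
    have hind : ∀ y : Fin U, Measurable fun v : ∀ i : CSIdx (2 * m + 1) U w, i.codomain =>
        (if (show Fin w from v (.hash r y)) = (show Fin w from v (.hash r x))
          then (1 : ℝ) else 0) :=
      fun y => Measurable.ite (hindset y) measurable_const measurable_const
    have hnoise : Measurable fun v : ∀ i : CSIdx (2 * m + 1) U w, i.codomain =>
        (show ℝ from v (.noise r (show Fin w from v (.hash r x)))) := by
      have heq : (fun v : ∀ i : CSIdx (2 * m + 1) U w, i.codomain =>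
          (show ℝ from v (.noise r (show Fin w from v (.hash r x)))))
          = fun v => ∑ cc : Fin w,
            (if (show Fin w from v (.hash r x)) = cc
              then (show ℝ from v (.noise r cc)) else 0) := by
        funext v
        rw [Finset.sum_ite_eq]
        exact (if_pos (Finset.mem_univ _)).symm
      rw [heq]
      apply Finset.measurable_sum
      intro cc _
      exact Measurable.ite (hhash r x cc)
        (measurable_pi_apply (CSIdx.noise r cc) : Measurable fun
          v : ∀ i : CSIdx (2 * m + 1) U w, i.codomain => (show ℝ from v (.noise r cc)))
        measurable_const
    exact (hsgn x).mul ((Finset.measurable_sum _ (fun y _ =>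
      ((measurable_const.mul (hsgn y)).mul (hind y)))).add hnoise)
  have hfΦ : (fun ω => fhat ω - c) = Φ ∘ (fun ω i => CSVars h g η i ω) := by
    funext ω
    simp only [Function.comp_apply, hΦdef, hfh ω]
    rfl
  -- the good event
  have hae : ∀ᵐ ω ∂P, ∀ r : Fin (2 * m + 1), g r x ω = 1 ∨ g r x ω = -1 := by
    rw [ae_all_iff]
    intro r
    have hms : MeasurableSet (({1, -1} : Set ℝ)ᶜ) :=
      ((Set.finite_singleton (-1)).insert 1).measurableSet.compl
    have hgm : Measurable (g r x) := hmeas (.sign r x)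
    have h0 : P (g r x ⁻¹' (({1, -1} : Set ℝ)ᶜ)) = 0 := by
      rw [← Measure.map_apply hgm hms, hdistg r x,
        Measure.smul_apply, Measure.add_apply, Measure.dirac_apply' _ hms,
        Measure.dirac_apply' _ hms]
      norm_num
    refine Filter.eventually_of_mem (MeasureTheory.mem_ae_iff.mpr ?_) (fun ω hω => hω)
    have hseq : ((fun ω => g r x ω = 1 ∨ g r x ω = -1) : Set Ω)ᶜ
        = g r x ⁻¹' (({1, -1} : Set ℝ)ᶜ) := by
      ext ω
      show ¬(g r x ω = 1 ∨ g r x ω = -1) ↔ ¬(g r x ω ∈ ({1, -1} : Set ℝ))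
      simp [Set.mem_insert_iff]
    exact (congrArg P hseq).trans h0
  -- the key pointwise identity on the good event
  have hkey : ∀ ω, (∀ r : Fin (2 * m + 1), g r x ω = 1 ∨ g r x ω = -1) →
      Φ (fun i => CSVars h g' η' i ω) = -(Φ (fun i => CSVars h g η i ω)) := by
    intro ω hω
    have e2 : Φ (fun i => CSVars h g' η' i ω) = median (fun r => g' r x ω *
        ((∑ y : Fin U, (f y : ℝ) * g' r y ω * (if h r y ω = h r x ω then 1 else 0))
          + η' r (h r x ω) ω)) - c := rfl
    have e1 : Φ (fun i => CSVars h g η i ω) = median (fun r => g r x ω *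
        ((∑ y : Fin U, (f y : ℝ) * g r y ω * (if h r y ω = h r x ω then 1 else 0))
          + η r (h r x ω) ω)) - c := rfl
    rw [e1, e2]
    have hA'A : (fun r => g' r x ω *
        ((∑ y : Fin U, (f y : ℝ) * g' r y ω * (if h r y ω = h r x ω then 1 else 0))
          + η' r (h r x ω) ω))
        = fun r => 2 * c - (g r x ω *
        ((∑ y : Fin U, (f y : ℝ) * g r y ω * (if h r y ω = h r x ω then 1 else 0))
          + η r (h r x ω) ω)) := by
      funext r
      have hs2 : g r x ω * g r x ω = 1 := by
        rcases hω r with hs | hs <;> rw [hs] <;> norm_num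
      have hgx' : g' r x ω = g r x ω := by simp [hg'def]
      have hsum : ∀ G : Fin U → ℝ, (∑ y : Fin U, G y)
          = G x + ∑ y ∈ Finset.univ.erase x, G y :=
        fun G => (Finset.add_sum_erase _ G (Finset.mem_univ x)).symm
      rw [hsum (fun y => (f y : ℝ) * g' r y ω * (if h r y ω = h r x ω then 1 else 0)),
        hsum (fun y => (f y : ℝ) * g r y ω * (if h r y ω = h r x ω then 1 else 0))]
      simp only [eq_self_iff_true, if_true]
      rw [hgx']
      have hsum' : (∑ y ∈ Finset.univ.erase x,
          (f y : ℝ) * g' r y ω * (if h r y ω = h r x ω then 1 else 0))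
          = -∑ y ∈ Finset.univ.erase x,
            (f y : ℝ) * g r y ω * (if h r y ω = h r x ω then 1 else 0) := by
        rw [← Finset.sum_neg_distrib]
        apply Finset.sum_congr rfl
        intro y hy
        have hyx : g' r y ω = -(g r y ω) := by
          simp [hg'def, Finset.ne_of_mem_erase hy]
        rw [hyx]
        ring
      rw [hsum']
      have hη'' : η' r (h r x ω) ω = -(η r (h r x ω) ω) := rfl
      rw [hη'']
      linear_combination (2 * c) * hs2
    rw [hA'A, median_antitone_comp (fun t => 2 * c - t)
      (fun s t hst => by dsimp; linarith) _]
    ring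
  have haeeq : (fun ω => -(Φ (fun i => CSVars h g η i ω)))
      =ᵐ[P] (fun ω => Φ (fun i => CSVars h g' η' i ω)) := by
    filter_upwards [hae] with ω hω
    exact (hkey ω hω).symm
  calc Measure.map (fun t : ℝ => -t) (Measure.map (fun ω => fhat ω - c) P)
      = Measure.map (fun ω => -(Φ (fun i => CSVars h g η i ω))) P := by
        rw [hfΦ, Measure.map_map (measurable_neg : Measurable (fun t : ℝ => -t))
          (hΦmeas.comp hvmeas)]
        rfl
    _ = Measure.map (fun ω => Φ (fun i => CSVars h g' η' i ω)) P := Measure.map_congr haeeq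
    _ = Measure.map Φ (Measure.map (fun ω i => CSVars h g' η' i ω) P) := by
        rw [Measure.map_map hΦmeas hvmeas']
        rfl
    _ = Measure.map Φ (Measure.map (fun ω i => CSVars h g η i ω) P) := by rw [hjoint]
    _ = Measure.map (fun ω => fhat ω - c) P := by
        rw [Measure.map_map hΦmeas hvmeas, ← hfΦ]
end

section
/- Let m ∈ ℕ, B > 0, v ∈ ℝ, and let a : Fin(2m+1) → ℝ be a tuple such that a(i₀) = v for some index i₀, exactly m indices i satisfy a(i) > v + 2B, and exactly m indices i satisfy a(i) < v − 2B. Let η : Fin(2m+1) → ℝ satisfy |η(i)| ≤ B for all i. Then median(a) = v and median(i ↦ a(i) + η(i)) = v + η(i₀). In particular, the median of the perturbed tuple differs from the median of the original tuple by exactly the perturbation η(i₀) at the central entry. -/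
lemma median_key {m : ℕ} (a : Fin (2 * m + 1) → ℝ) (x : ℝ)
    (h1 : (Finset.univ.filter (fun i => a i < x)).card ≤ m)
    (h2 : (Finset.univ.filter (fun i => x < a i)).card ≤ m) :
    (Multiset.sort (Multiset.map a Finset.univ.val) (· ≤ ·))[m]'(by
      simp [Multiset.length_sort]; omega) = x := by
  set l := Multiset.sort (Multiset.map a Finset.univ.val) (· ≤ ·) with hl
  have hlen : l.length = 2 * m + 1 := by simp [hl]
  have hsorted : l.Pairwise (· ≤ ·) := Multiset.pairwise_sort _ _
  have hm : m < l.length := by omega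
  have key : ∀ p : ℝ → Prop, ∀ inst : DecidablePred p,
      l.countP (fun y => decide (p y)) = (Finset.univ.filter (fun i => p (a i))).card := by
    intro p inst
    have h1 : (l : Multiset ℝ).countP p = Multiset.countP p (Multiset.map a Finset.univ.val) := by
      rw [hl, Multiset.sort_eq]
    rw [← Multiset.coe_countP, h1, Multiset.countP_map]
    rfl
  have hc1 : l.countP (fun y => decide (y < x)) ≤ m := (key _ _).le.trans h1
  have hc2 : l.countP (fun y => decide (x < y)) ≤ m := (key _ _).le.trans h2
  -- lower bound: x ≤ l[m]
  have hx_le : x ≤ l[m] := by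
    by_contra h
    push_neg at h
    have hall : (l.take (m + 1)).countP (fun y => decide (y < x)) = (l.take (m + 1)).length := by
      apply List.countP_eq_length.2
      intro y hy
      obtain ⟨i, hi, rfl⟩ := List.getElem_of_mem hy
      rw [List.length_take] at hi
      rw [List.getElem_take]
      have : l[i] ≤ l[m] := hsorted.rel_get_of_le (a := ⟨i, by omega⟩) (b := ⟨m, hm⟩)
        (by simp; omega)
      simpa using lt_of_le_of_lt this h
    have hle := (List.take_sublist (m + 1) l).countP_le (p := fun y => decide (y < x))
    rw [hall] at hle
    rw [List.length_take] at hle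
    omega
  -- upper bound: l[m] ≤ x
  have hx_ge : l[m] ≤ x := by
    by_contra h
    push_neg at h
    have hall : (l.drop m).countP (fun y => decide (x < y)) = (l.drop m).length := by
      apply List.countP_eq_length.2
      intro y hy
      obtain ⟨i, hi, rfl⟩ := List.getElem_of_mem hy
      rw [List.length_drop] at hi
      rw [List.getElem_drop]
      have : l[m] ≤ l[m + i] := hsorted.rel_get_of_le (a := ⟨m, hm⟩) (b := ⟨m + i, by omega⟩)
        (by simp)
      simpa using lt_of_lt_of_le h this
    have hle := (List.drop_sublist m l).countP_le (p := fun y => decide (x < y))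
    rw [hall] at hle
    rw [List.length_drop] at hle
    omega
  exact le_antisymm hx_ge hx_le

lemma median_eq {m : ℕ} (a : Fin (2 * m + 1) → ℝ) (x : ℝ)
    (h1 : (Finset.univ.filter (fun i => a i < x)).card ≤ m)
    (h2 : (Finset.univ.filter (fun i => x < a i)).card ≤ m) :
    median a = x :=
  median_key a x h1 h2


/-- If `a` has one entry equal to `v`, exactly `m` entries above `v + 2B` and
exactly `m` entries below `v - 2B`, then `median a = v`, and after any entrywise perturbation
`η` bounded by `B`, the median becomes exactly `v + η(i₀)`, the perturbation of the central
entry. -/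
theorem stmt7 (m : ℕ) (B v : ℝ) (hB : 0 < B)
    (a : Fin (2 * m + 1) → ℝ) (i₀ : Fin (2 * m + 1)) (ha : a i₀ = v)
    (hup : (Finset.univ.filter (fun i => v + 2 * B < a i)).card = m)
    (hdown : (Finset.univ.filter (fun i => a i < v - 2 * B)).card = m)
    (η : Fin (2 * m + 1) → ℝ) (hη : ∀ i, |η i| ≤ B) :
    median a = v ∧ median (fun i => a i + η i) = v + η i₀ := by
  classical
  set S := Finset.univ.filter (fun i => v + 2 * B < a i) with hS
  set T := Finset.univ.filter (fun i => a i < v - 2 * B) with hT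
  have hi₀S : i₀ ∉ S := by simp [hS, ha]; nlinarith
  have hi₀T : i₀ ∉ T := by simp [hT, ha]; nlinarith
  have hST : Disjoint S T := by
    rw [Finset.disjoint_left]
    intro i hiS hiT
    simp [hS] at hiS; simp [hT] at hiT
    nlinarith
  -- the three parts cover everything
  have hcard : (insert i₀ (S ∪ T)).card = 2 * m + 1 := by
    rw [Finset.card_insert_of_notMem (by simp [hi₀S, hi₀T]),
      Finset.card_union_of_disjoint hST, hup, hdown]
    omega
  have hcover : ∀ i : Fin (2 * m + 1), i = i₀ ∨ i ∈ S ∨ i ∈ T := by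
    have huniv : insert i₀ (S ∪ T) = Finset.univ := by
      apply Finset.eq_univ_of_card
      simpa using hcard
    intro i
    have : i ∈ insert i₀ (S ∪ T) := huniv ▸ Finset.mem_univ i
    simpa using this
  have hSmem : ∀ i, i ∈ S → v + 2 * B < a i := by intro i hi; simpa [hS] using hi
  have hTmem : ∀ i, i ∈ T → a i < v - 2 * B := by intro i hi; simpa [hT] using hi
  constructor
  · apply median_eq
    · refine le_of_le_of_eq (Finset.card_le_card ?_) hdown
      intro i hi
      simp only [Finset.mem_filter, Finset.mem_univ, true_and] at hi ⊢
      rcases hcover i with rfl | hiS | hiT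
      · exact absurd hi (by simp [ha])
      · exact absurd hi (by have := hSmem i hiS; simp; nlinarith)
      · exact hiT
    · refine le_of_le_of_eq (Finset.card_le_card ?_) hup
      intro i hi
      simp only [Finset.mem_filter, Finset.mem_univ, true_and] at hi ⊢
      rcases hcover i with rfl | hiS | hiT
      · exact absurd hi (by simp [ha])
      · exact hiS
      · exact absurd hi (by have := hTmem i hiT; simp; nlinarith)
  · have hb := abs_le.1 (hη i₀)
    apply median_eq
    · refine le_of_le_of_eq (Finset.card_le_card ?_) hdown
      intro i hi
      simp only [Finset.mem_filter, Finset.mem_univ, true_and] at hi ⊢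
      have hbi := abs_le.1 (hη i)
      rcases hcover i with rfl | hiS | hiT
      · exact absurd hi (by simp [ha])
      · exact absurd hi (by have := hSmem i hiS; simp; nlinarith)
      · exact hiT
    · refine le_of_le_of_eq (Finset.card_le_card ?_) hup
      intro i hi
      simp only [Finset.mem_filter, Finset.mem_univ, true_and] at hi ⊢
      have hbi := abs_le.1 (hη i)
      rcases hcover i with rfl | hiS | hiT
      · exact absurd hi (by simp [ha])
      · exact hiS
      · exact absurd hi (by have := hTmem i hiT; simp; nlinarith)
end

section
/- Fix k, w, U ≥ 1 and hash functions h_r : Fin U → Fin w for r ∈ Fin k, and for a frequency function f : Fin U → ℕ let T_f[r,c] = Σ_{y : h_r(y)=c} f(y) denote the Count-Min counter array. If f, f' : Fin U → ℕ are neighboring under replacement — i.e., there exist items a, b ∈ Fin U with f(a) ≥ 1 such that f' agrees with f except that f'(a) = f(a) − 1 and f'(b) = f(b) + 1 (and f' = f if a = b) — then Σ_{r ∈ Fin k} Σ_{c ∈ Fin w} (T_f[r,c] − T_{f'}[r,c])² ≤ 2k. In particular the ℓ₂-sensitivity of the Count-Min counter array is at most √(2k). -/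
/-- The squared ℓ₂ distance between the Count-Min counter arrays of two
frequency functions that are neighboring under replacement (one unit of mass moved from item
`a` to item `b`) is at most `2k`; i.e. the ℓ₂-sensitivity of the counter array is `≤ √(2k)`. -/
theorem stmt8 (k w U : ℕ) (hk : 1 ≤ k) (hw : 1 ≤ w) (hU : 1 ≤ U)
    (h : Fin k → Fin U → Fin w) (f f' : Fin U → ℕ)
    (a b : Fin U) (hfa : 1 ≤ f a)
    (hneighbor : if a = b then f' = f else
      (f' a = f a - 1 ∧ f' b = f b + 1 ∧ ∀ y, y ≠ a → y ≠ b → f' y = f y))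
    (T : (Fin U → ℕ) → Fin k → Fin w → ℝ)
    (hT : ∀ F r c, T F r c = ∑ y ∈ Finset.univ.filter (fun y => h r y = c), (F y : ℝ)) :
    ∑ r : Fin k, ∑ c : Fin w, (T f r c - T f' r c) ^ 2 ≤ 2 * k := by
  by_cases hab : a = b
  · rw [if_pos hab] at hneighbor
    subst hneighbor
    simp [hk]
  · rw [if_neg hab] at hneighbor
    obtain ⟨h1, h2, h3⟩ := hneighbor
    have key : ∀ y : Fin U, (f y : ℝ) - f' y =
        (if y = a then (1:ℝ) else 0) - (if y = b then (1:ℝ) else 0) := by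
      intro y
      by_cases hy1 : y = a
      · subst hy1
        rw [if_pos rfl, if_neg hab, h1]
        have : (↑(f y - 1) : ℝ) = (f y : ℝ) - 1 := by
          push_cast [hfa]; ring
        rw [this]; ring
      · by_cases hy2 : y = b
        · subst hy2
          rw [if_neg hy1, if_pos rfl, h2]
          push_cast; ring
        · rw [if_neg hy1, if_neg hy2, h3 y hy1 hy2]; ring
    have hrow : ∀ r c, T f r c - T f' r c =
        (if h r a = c then (1:ℝ) else 0) - (if h r b = c then (1:ℝ) else 0) := by
      intro r c
      rw [hT, hT, ← Finset.sum_sub_distrib]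
      simp only [key]
      rw [Finset.sum_sub_distrib]
      congr 1
      · rw [Finset.sum_ite_eq' (Finset.univ.filter (fun y => h r y = c)) a (fun _ => (1:ℝ))]
        simp
      · rw [Finset.sum_ite_eq' (Finset.univ.filter (fun y => h r y = c)) b (fun _ => (1:ℝ))]
        simp
    calc ∑ r : Fin k, ∑ c : Fin w, (T f r c - T f' r c) ^ 2
        ≤ ∑ r : Fin k, ∑ c : Fin w,
            ((if h r a = c then (1:ℝ) else 0) + (if h r b = c then (1:ℝ) else 0)) := by
          apply Finset.sum_le_sum; intro r _
          apply Finset.sum_le_sum; intro c _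
          rw [hrow]
          split_ifs <;> norm_num
      _ = ∑ r : Fin k, (2:ℝ) := by
          apply Finset.sum_congr rfl; intro r _
          rw [Finset.sum_add_distrib]
          simp
          norm_num
      _ = 2 * k := by simp; ring
end

section
/- Let σ > 0, μ₁, μ₂ ∈ ℝ and α > 1, and let p_i(x) = (1/(σ√(2π)))·exp(−(x − μ_i)²/(2σ²)) be the density of the Gaussian N(μ_i, σ²) for i = 1, 2. Then (1/(α−1))·log ∫_ℝ p₁(x)^α · p₂(x)^{1−α} dx = α·(μ₁ − μ₂)²/(2σ²). That is, the α-Rényi divergence between two Gaussians with common variance σ² and means at distance Δ = |μ₁ − μ₂| equals α·Δ²/(2σ²); equivalently, the Gaussian mechanism with noise variance σ² = Δ²/(2ρ) satisfies ρ-zero-concentrated differential privacy. -/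
open MeasureTheory Real

/-- The α-Rényi divergence between two Gaussians with common variance `σ²`
and means `μ₁, μ₂` equals `α·(μ₁-μ₂)²/(2σ²)`: this is the zCDP guarantee of the Gaussian
mechanism. -/
theorem stmt9 (σ μ₁ μ₂ α : ℝ) (hσ : 0 < σ) (hα : 1 < α) :
    (1 / (α - 1)) * Real.log (∫ x : ℝ,
        ((1 / (σ * Real.sqrt (2 * π))) * Real.exp (-(x - μ₁) ^ 2 / (2 * σ ^ 2))) ^ α *
        ((1 / (σ * Real.sqrt (2 * π))) * Real.exp (-(x - μ₂) ^ 2 / (2 * σ ^ 2))) ^ (1 - α))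
      = α * (μ₁ - μ₂) ^ 2 / (2 * σ ^ 2) := by
  have hπ : (0:ℝ) < 2 * π := by positivity
  have hs : 0 < Real.sqrt (2 * π) := Real.sqrt_pos.mpr hπ
  have hσ2 : (2 * σ ^ 2) ≠ 0 := by positivity
  set c : ℝ := 1 / (σ * Real.sqrt (2 * π)) with hc
  have hcpos : 0 < c := by positivity
  set m : ℝ := α * μ₁ + (1 - α) * μ₂ with hm
  set K : ℝ := c * Real.exp (α * (α - 1) * (μ₁ - μ₂) ^ 2 / (2 * σ ^ 2)) with hK
  have key : ∀ x : ℝ,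
      (c * Real.exp (-(x - μ₁) ^ 2 / (2 * σ ^ 2))) ^ α *
      (c * Real.exp (-(x - μ₂) ^ 2 / (2 * σ ^ 2))) ^ (1 - α)
      = K * Real.exp (-(x - m) ^ 2 / (2 * σ ^ 2)) := by
    intro x
    rw [Real.mul_rpow hcpos.le (Real.exp_pos _).le,
        Real.mul_rpow hcpos.le (Real.exp_pos _).le,
        ← Real.exp_mul, ← Real.exp_mul]
    have h1 : c ^ α * Real.exp (-(x - μ₁) ^ 2 / (2 * σ ^ 2) * α) *
        (c ^ (1 - α) * Real.exp (-(x - μ₂) ^ 2 / (2 * σ ^ 2) * (1 - α)))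
        = (c ^ α * c ^ (1 - α)) *
          Real.exp (-(x - μ₁) ^ 2 / (2 * σ ^ 2) * α + -(x - μ₂) ^ 2 / (2 * σ ^ 2) * (1 - α)) := by
      rw [Real.exp_add]; ring
    rw [h1, ← Real.rpow_add hcpos]
    have h2 : α + (1 - α) = 1 := by ring
    rw [h2, Real.rpow_one]
    have h3 : -(x - μ₁) ^ 2 / (2 * σ ^ 2) * α + -(x - μ₂) ^ 2 / (2 * σ ^ 2) * (1 - α)
        = α * (α - 1) * (μ₁ - μ₂) ^ 2 / (2 * σ ^ 2) + -(x - m) ^ 2 / (2 * σ ^ 2) := by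
      field_simp
      ring
    rw [h3, Real.exp_add, hK]
    ring
  rw [show (∫ x : ℝ,
        ((1 / (σ * Real.sqrt (2 * π))) * Real.exp (-(x - μ₁) ^ 2 / (2 * σ ^ 2))) ^ α *
        ((1 / (σ * Real.sqrt (2 * π))) * Real.exp (-(x - μ₂) ^ 2 / (2 * σ ^ 2))) ^ (1 - α))
      = ∫ x : ℝ, K * Real.exp (-(x - m) ^ 2 / (2 * σ ^ 2)) from by
        exact integral_congr_ae (Filter.Eventually.of_forall key)]
  rw [MeasureTheory.integral_const_mul]
  have hshift : (∫ x : ℝ, Real.exp (-(x - m) ^ 2 / (2 * σ ^ 2)))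
      = ∫ x : ℝ, Real.exp (-(1 / (2 * σ ^ 2)) * x ^ 2) := by
    rw [← integral_sub_right_eq_self (fun x => Real.exp (-(1 / (2 * σ ^ 2)) * x ^ 2)) m]
    congr 1; funext x; congr 1; field_simp
  rw [hshift, integral_gaussian]
  have hval : Real.sqrt (π / (1 / (2 * σ ^ 2))) = σ * Real.sqrt (2 * π) := by
    rw [show π / (1 / (2 * σ ^ 2)) = σ ^ 2 * (2 * π) from by field_simp,
        Real.sqrt_mul (by positivity), Real.sqrt_sq hσ.le]
  rw [hval, hK]
  have hcancel : c * Real.exp (α * (α - 1) * (μ₁ - μ₂) ^ 2 / (2 * σ ^ 2)) * (σ * Real.sqrt (2 * π))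
      = Real.exp (α * (α - 1) * (μ₁ - μ₂) ^ 2 / (2 * σ ^ 2)) := by
    rw [hc]; field_simp
  rw [hcancel, Real.log_exp]
  have hα1 : α - 1 ≠ 0 := by linarith
  field_simp
end

section
/- Let Δ > 0, ρ > 0, δ ∈ (0,1), set σ² = Δ²/(2ρ) and ε = ρ + 2·√(ρ·log(1/δ)). Then for all μ₁, μ₂ ∈ ℝ with |μ₁ − μ₂| ≤ Δ and every Borel set S ⊆ ℝ, N(μ₁, σ²)(S) ≤ e^ε · N(μ₂, σ²)(S) + δ. That is, the one-dimensional Gaussian mechanism with noise level σ² = Δ²/(2ρ) on a statistic of ℓ₂-sensitivity Δ satisfies (ρ + 2√(ρ·log(1/δ)), δ)-differential privacy. -/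
open MeasureTheory ProbabilityTheory Real
open scoped ENNReal NNReal


/-- Pointwise density ratio bound. -/
lemma pdf_ratio (μ₁ μ₂ c : ℝ) (v : ℝ≥0) (hv : 0 < (v : ℝ)) (x : ℝ)
    (h : (x - μ₂) ^ 2 - (x - μ₁) ^ 2 ≤ 2 * v * c) :
    gaussianPDFReal μ₁ v x ≤ Real.exp c * gaussianPDFReal μ₂ v x := by
  unfold gaussianPDFReal
  rw [mul_left_comm]
  gcongr
  rw [← Real.exp_add, Real.exp_le_exp]
  have h2v : (0:ℝ) < 2 * v := by positivity
  rw [div_le_iff₀ h2v, add_mul, div_mul_cancel₀ _ h2v.ne']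
  nlinarith [h]

/-- Tail bound via pointwise comparison with a recentered Gaussian. -/
lemma gauss_tail (μ b : ℝ) (v : ℝ≥0) (hv : 0 < (v : ℝ)) (T : Set ℝ) (hT : MeasurableSet T)
    (h : ∀ x ∈ T, 0 ≤ (b - μ) * (x - b)) :
    gaussianReal μ v T ≤ ENNReal.ofReal (Real.exp (-(b - μ) ^ 2 / (2 * v))) := by
  have hv0 : v ≠ 0 := by
    intro h0; rw [h0] at hv; simp at hv
  have key : ∀ x ∈ T, gaussianPDFReal μ v x
      ≤ Real.exp (-(b - μ) ^ 2 / (2 * v)) * gaussianPDFReal b v x := by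
    intro x hx
    unfold gaussianPDFReal
    rw [mul_left_comm]
    gcongr
    rw [← Real.exp_add, Real.exp_le_exp]
    rw [← add_div, div_le_div_iff₀ (by positivity) (by positivity)]
    nlinarith [h x hx]
  calc gaussianReal μ v T = ∫⁻ x in T, gaussianPDF μ v x := gaussianReal_apply μ hv0 T
    _ ≤ ∫⁻ x in T, ENNReal.ofReal (Real.exp (-(b - μ) ^ 2 / (2 * v))) * gaussianPDF b v x := by
        refine setLIntegral_mono ((measurable_gaussianPDF b v).const_mul _) fun x hx => ?_
        rw [gaussianPDF, gaussianPDF, ← ENNReal.ofReal_mul (Real.exp_nonneg _)]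
        exact ENNReal.ofReal_le_ofReal (key x hx)
    _ = ENNReal.ofReal (Real.exp (-(b - μ) ^ 2 / (2 * v))) * gaussianReal b v T := by
        rw [lintegral_const_mul _ (measurable_gaussianPDF b v), gaussianReal_apply b hv0 T]
    _ ≤ ENNReal.ofReal (Real.exp (-(b - μ) ^ 2 / (2 * v))) * 1 := by
        gcongr; exact prob_le_one
    _ = _ := mul_one _

/-- The one-dimensional Gaussian mechanism with noise variance
`σ² = Δ²/(2ρ)` on a statistic of sensitivity `Δ` satisfies `(ρ + 2√(ρ·log(1/δ)), δ)`-DP: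
for any two means at distance at most `Δ` and any Borel set `S`,
`N(μ₁,σ²)(S) ≤ e^ε · N(μ₂,σ²)(S) + δ`. -/
theorem stmt10 (Δ ρ δ : ℝ) (hΔ : 0 < Δ) (hρ : 0 < ρ) (hδ : δ ∈ Set.Ioo (0 : ℝ) 1)
    (v : ℝ≥0) (hv : (v : ℝ) = Δ ^ 2 / (2 * ρ))
    (ε : ℝ) (hε : ε = ρ + 2 * Real.sqrt (ρ * Real.log (1 / δ))) :
    ∀ μ₁ μ₂ : ℝ, |μ₁ - μ₂| ≤ Δ → ∀ S : Set ℝ, MeasurableSet S →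
      gaussianReal μ₁ v S ≤ ENNReal.ofReal (Real.exp ε) * gaussianReal μ₂ v S
        + ENNReal.ofReal δ := by
  intro μ₁ μ₂ hμ S hS
  obtain ⟨hδ0, hδ1⟩ := hδ
  have hv' : (0:ℝ) < v := by rw [hv]; positivity
  have hv0 : v ≠ 0 := fun h0 => by simp [h0] at hv'
  set L : ℝ := Real.log (1 / δ) with hLdef
  have hL : 0 < L := Real.log_pos (by rw [lt_div_iff₀ hδ0]; linarith)
  set s : ℝ := Real.sqrt (ρ * L) with hsdef
  have hs0 : 0 ≤ s := Real.sqrt_nonneg _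
  have hs2 : s ^ 2 = ρ * L := Real.sq_sqrt (by positivity)
  have hερ : ρ ≤ ε := by rw [hε]; nlinarith
  have hε0 : 0 < ε := lt_of_lt_of_le hρ hερ
  set a : ℝ := μ₁ - μ₂ with hadef
  have ha : a ^ 2 ≤ Δ ^ 2 := by
    have := abs_le.mp hμ
    nlinarith [this.1, this.2]
  have h2rv : 2 * ρ * (v:ℝ) = Δ ^ 2 := by rw [hv]; field_simp
  have hu : a ^ 2 ≤ 2 * ρ * v := by rw [h2rv]; exact ha
  set A : Set ℝ := {x : ℝ | 2 * v * ε < a * (2 * x - μ₁ - μ₂)} with hAdef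
  have hA : MeasurableSet A :=
    measurableSet_lt measurable_const (by fun_prop)
  clear_value L s a
  -- density bound off A
  have bound1 : gaussianReal μ₁ v (S ∩ Aᶜ)
      ≤ ENNReal.ofReal (Real.exp ε) * gaussianReal μ₂ v S := by
    calc gaussianReal μ₁ v (S ∩ Aᶜ) = ∫⁻ x in S ∩ Aᶜ, gaussianPDF μ₁ v x :=
          gaussianReal_apply μ₁ hv0 _
      _ ≤ ∫⁻ x in S ∩ Aᶜ, ENNReal.ofReal (Real.exp ε) * gaussianPDF μ₂ v x := by
          refine setLIntegral_mono ((measurable_gaussianPDF μ₂ v).const_mul _) fun x hx => ?_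
          have hxA : ¬ (2 * (v:ℝ) * ε < a * (2 * x - μ₁ - μ₂)) := hx.2
          rw [gaussianPDF, gaussianPDF, ← ENNReal.ofReal_mul (Real.exp_nonneg _)]
          refine ENNReal.ofReal_le_ofReal (pdf_ratio μ₁ μ₂ ε v hv' x ?_)
          have hid : (x - μ₂) ^ 2 - (x - μ₁) ^ 2 = a * (2 * x - μ₁ - μ₂) := by
            rw [hadef]; ring
          rw [hid]; exact not_lt.mp hxA
      _ = ENNReal.ofReal (Real.exp ε) * gaussianReal μ₂ v (S ∩ Aᶜ) := by
          rw [lintegral_const_mul _ (measurable_gaussianPDF μ₂ v), gaussianReal_apply μ₂ hv0]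
      _ ≤ ENNReal.ofReal (Real.exp ε) * gaussianReal μ₂ v S := by
          gcongr; exact Set.inter_subset_left
  -- tail bound on A
  have bound2 : gaussianReal μ₁ v A ≤ ENNReal.ofReal δ := by
    by_cases ha0 : a = 0
    · have : A = ∅ := by
        ext x; simp only [hAdef, Set.mem_setOf_eq, Set.mem_empty_iff_false, iff_false, not_lt,
          ha0, zero_mul]
        positivity
      simp [this]
    · set b : ℝ := v * ε / a + (μ₁ + μ₂) / 2 with hbdef
      clear_value b
      have hbm : b - μ₁ = (2 * v * ε - a ^ 2) / (2 * a) := by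
        rw [hbdef]; field_simp; linear_combination a * hadef
      have hva : a ^ 2 ≤ 2 * v * ε := by nlinarith
      have h1 : ∀ x ∈ A, 0 ≤ (b - μ₁) * (x - b) := by
        intro x hx
        have hxA : 2 * (v:ℝ) * ε < a * (2 * x - μ₁ - μ₂) := hx
        have hax : 0 ≤ a * (x - b) := by
          have : a * (x - b) = (a * (2 * x - μ₁ - μ₂) - 2 * v * ε) / 2 := by
            rw [hbdef]; field_simp; ring
          rw [this]; nlinarith [hxA]
        have : (b - μ₁) * (x - b) = (2 * v * ε - a ^ 2) * (a * (x - b)) / (2 * a ^ 2) := by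
          rw [hbm]; field_simp
        rw [this]
        have := sub_nonneg.mpr hva
        positivity
      have h2 : Real.exp (-(b - μ₁) ^ 2 / (2 * v)) ≤ δ := by
        rw [← Real.exp_log hδ0, Real.exp_le_exp]
        have hlogδ : Real.log δ = -L := by
          rw [hLdef, one_div, Real.log_inv, neg_neg]
        rw [hlogδ, hbm, div_pow, neg_div, neg_le_neg_iff,
          le_div_iff₀ (by positivity), le_div_iff₀ (by positivity), hε]
        have key : (2 * (v:ℝ) * (ρ + 2 * s) - a ^ 2) ^ 2 - L * (2 * v) * (2 * a) ^ 2
            = (a ^ 2 - 2 * ρ * v) ^ 2 + 8 * v * (s + L) * (2 * ρ * v - a ^ 2)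
              + 16 * v ^ 2 * (s ^ 2 - ρ * L) := by ring
        have t1 : (0:ℝ) ≤ (a ^ 2 - 2 * ρ * (v:ℝ)) ^ 2 := sq_nonneg _
        have t2 : (0:ℝ) ≤ 8 * (v:ℝ) * (s + L) * (2 * ρ * v - a ^ 2) :=
          mul_nonneg (mul_nonneg (by positivity) (add_nonneg hs0 hL.le)) (by linarith)
        have t3 : (16:ℝ) * (v:ℝ) ^ 2 * (s ^ 2 - ρ * L) = 0 := by rw [hs2]; ring
        linarith [key, t1, t2, t3]
      calc gaussianReal μ₁ v A ≤ ENNReal.ofReal (Real.exp (-(b - μ₁) ^ 2 / (2 * v))) :=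
            gauss_tail μ₁ b v hv' A hA h1
        _ ≤ ENNReal.ofReal δ := ENNReal.ofReal_le_ofReal h2
  calc gaussianReal μ₁ v S ≤ gaussianReal μ₁ v ((S ∩ Aᶜ) ∪ A) := by
        refine measure_mono fun x hx => ?_
        by_cases hxA : x ∈ A
        · exact Or.inr hxA
        · exact Or.inl ⟨hx, hxA⟩
    _ ≤ gaussianReal μ₁ v (S ∩ Aᶜ) + gaussianReal μ₁ v A := measure_union_le _ _
    _ ≤ ENNReal.ofReal (Real.exp ε) * gaussianReal μ₂ v S + ENNReal.ofReal δ :=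
        add_le_add bound1 bound2
end

section
/- Let L ∈ ℕ, let f : ℕ → ℕ, and let x be a natural number with x < 2^L. Then Σ_{y < x} f(y) = Σ_{j=0}^{L−1} ( if ⌊x/2^j⌋ is odd then Σ_{y : ⌊y/2^j⌋ = ⌊x/2^j⌋ − 1} f(y) else 0 ), where ⌊·/·⌋ denotes natural-number division and the inner sum ranges over the finitely many naturals y with ⌊y/2^j⌋ = ⌊x/2^j⌋ − 1. That is, the rank (number of items strictly below x, counted with frequency) decomposes into the frequencies of at most L dyadic intervals. -/
open Finset

lemma dyadic_aux (f : ℕ → ℕ) : ∀ L x, ∑ y ∈ Ico ((x / 2^L) * 2^L) x, f y =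
    ∑ j ∈ range L, if Odd (x / 2^j) then
      ∑ y ∈ Ico ((x/2^j - 1) * 2^j) ((x/2^j) * 2^j), f y else 0 := by
  intro L
  induction L with
  | zero => intro x; simp
  | succ L ih =>
    intro x
    rw [Finset.sum_range_succ, ← ih]
    have hdiv : x / 2^(L+1) = x / 2^L / 2 := by
      rw [pow_succ, Nat.div_div_eq_div_mul]
    have h1 : (x / 2^(L+1)) * 2^(L+1) ≤ (x / 2^L) * 2^L := by
      rw [hdiv, pow_succ]
      calc x / 2^L / 2 * (2^L * 2) = (x / 2^L / 2 * 2) * 2^L := by ring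
        _ ≤ (x / 2^L) * 2^L := Nat.mul_le_mul_right _ (Nat.div_mul_le_self _ _)
    have h2 : (x / 2^L) * 2^L ≤ x := Nat.div_mul_le_self _ _
    rw [← Finset.sum_Ico_consecutive f h1 h2]
    have hblock : (∑ y ∈ Ico ((x / 2^(L+1)) * 2^(L+1)) ((x / 2^L) * 2^L), f y) =
        if Odd (x / 2^L) then
          ∑ y ∈ Ico ((x/2^L - 1) * 2^L) ((x/2^L) * 2^L), f y else 0 := by
      rcases Nat.even_or_odd (x / 2^L) with he | ho
      · rw [if_neg (Nat.not_odd_iff_even.mpr he)]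
        obtain ⟨k, hk⟩ := he
        have hk2 : x / 2^(L+1) = k := by rw [hdiv, hk]; omega
        rw [hk2, hk]
        have : k * 2^(L+1) = (k + k) * 2^L := by rw [pow_succ]; ring
        rw [this, Ico_self, sum_empty]
      · rw [if_pos ho]
        obtain ⟨k, hk⟩ := ho
        have hk2 : x / 2^(L+1) = k := by rw [hdiv, hk]; omega
        rw [hk2, hk]
        have e1 : 2 * k + 1 - 1 = 2 * k := by omega
        have : k * 2^(L+1) = (2 * k + 1 - 1) * 2^L := by rw [e1, pow_succ]; ring
        rw [this]
    rw [hblock]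
    ring

/-- Dyadic decomposition of the rank: for `x < 2^L`, the number of items
strictly below `x`, counted with frequency `f`, equals the sum over levels `j < L` at which
`⌊x/2^j⌋` is odd of the total frequency of the dyadic block `{y : ⌊y/2^j⌋ = ⌊x/2^j⌋ - 1}`. -/
theorem stmt11 (L : ℕ) (f : ℕ → ℕ) (x : ℕ) (hx : x < 2 ^ L) :
    ∑ y ∈ Finset.range x, f y =
      ∑ j ∈ Finset.range L,
        if Odd (x / 2 ^ j) then
          ∑ y ∈ (Finset.range (2 ^ L)).filter (fun y => y / 2 ^ j = x / 2 ^ j - 1), f y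
        else 0 := by
  have h0 : x / 2^L = 0 := Nat.div_eq_of_lt hx
  have key := dyadic_aux f L x
  rw [h0] at key
  simp only [zero_mul, ← Finset.range_eq_Ico] at key
  rw [key]
  apply Finset.sum_congr rfl
  intro j hj
  by_cases h : Odd (x / 2^j)
  · rw [if_pos h, if_pos h]
    apply Finset.sum_congr _ (fun _ _ => rfl)
    have hpos : 1 ≤ x / 2^j := h.pos
    have hle : (x / 2^j) * 2^j ≤ x := Nat.div_mul_le_self _ _
    have hp2 : 0 < 2^j := Nat.two_pow_pos j
    ext y
    simp only [Finset.mem_filter, Finset.mem_range, Finset.mem_Ico]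
    constructor
    · rintro ⟨hy1, hy2⟩
      have hyd : y / 2^j = x / 2^j - 1 := by
        apply Nat.div_eq_of_lt_le
        · exact hy1
        · have : x / 2^j - 1 + 1 = x / 2^j := by omega
          rw [this]; exact hy2
      exact ⟨by omega, hyd⟩
    · rintro ⟨hy, hyd⟩
      constructor
      · calc (x/2^j - 1) * 2^j = (y/2^j) * 2^j := by rw [hyd]
          _ ≤ y := Nat.div_mul_le_self _ _
      · have : y / 2^j < x / 2^j := by omega
        exact lt_of_lt_of_le ((Nat.div_lt_iff_lt_mul hp2).mp this) (le_refl _)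
  · rw [if_neg h, if_neg h]
end

section
/- Let U, w ≥ 1, let f : Fin U → ℤ, and fix an item x ∈ Fin U. Let (H_y)_{y ∈ Fin U} be i.i.d. uniform random variables on Fin w and (G_y)_{y ∈ Fin U} be i.i.d. uniform random variables on {−1,+1}, the two families mutually independent. Define the single-row CountSketch estimator Z = G_x · Σ_{y ∈ Fin U} f(y)·G_y·1{H_y = H_x}. Then E[Z] = f(x) and Var(Z) = (Σ_{y ∈ Fin U, y ≠ x} f(y)²)/w. -/
open MeasureTheory ProbabilityTheory Real
open scoped ENNReal NNReal

/-- Codomain of the combined family: hash values live in `Fin w`, sign values in `ℝ`. -/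
def Codom (U w : ℕ) : Fin U ⊕ Fin U → Type
  | .inl _ => Fin w
  | .inr _ => ℝ

instance {U w : ℕ} (i : Fin U ⊕ Fin U) : MeasurableSpace (Codom U w i) :=
  match i with
  | .inl _ => inferInstanceAs (MeasurableSpace (Fin w))
  | .inr _ => inferInstanceAs (MeasurableSpace ℝ)

/-- The combined family of the hash variables and the sign variables. -/
def Vars {Ω : Type*} {U w : ℕ} (H : Fin U → Ω → Fin w) (G : Fin U → Ω → ℝ) :
    ∀ i : Fin U ⊕ Fin U, Ω → Codom U w i
  | .inl y => H y
  | .inr y => G y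

/-- The collision indicator `1{H_y = H_x}`. -/
def Ind {Ω : Type*} {U w : ℕ} (H : Fin U → Ω → Fin w) (x y : Fin U) : Ω → ℝ :=
  fun ω => if H y ω = H x ω then 1 else 0

lemma key_indep {Ω : Type*} [MeasurableSpace Ω] {P : Measure Ω} {U w : ℕ}
    {H : Fin U → Ω → Fin w} {G : Fin U → Ω → ℝ}
    (hmeas : ∀ i, Measurable (Vars H G i))
    (hindep : iIndepFun (Vars H G) P)
    (i : Fin U)
    (ψ : (∀ j : (Finset.univ.erase (Sum.inr i) : Finset (Fin U ⊕ Fin U)), Codom U w j) → ℝ)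
    (hψ : Measurable ψ) :
    IndepFun (G i) (fun ω => ψ fun j => Vars H G j ω) P := by
  have hD : Disjoint ({Sum.inr i} : Finset (Fin U ⊕ Fin U)) (Finset.univ.erase (Sum.inr i)) := by
    simp
  have hφ : Measurable (fun p : ∀ j : ({Sum.inr i} : Finset (Fin U ⊕ Fin U)), Codom U w j =>
      (p ⟨Sum.inr i, Finset.mem_singleton_self _⟩ : ℝ)) := measurable_pi_apply _
  have h := (hindep.indepFun_finset {Sum.inr i} (Finset.univ.erase (Sum.inr i)) hD hmeas).comp
    hφ hψ
  exact h


/-- Extract a sign coordinate from a partial assignment. -/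
def getR {U w : ℕ} {S : Finset (Fin U ⊕ Fin U)} (r : Fin U) (h : Sum.inr r ∈ S)
    (p : ∀ j : S, Codom U w j) : ℝ := p ⟨Sum.inr r, h⟩

/-- Extract a hash coordinate from a partial assignment. -/
def getL {U w : ℕ} {S : Finset (Fin U ⊕ Fin U)} (y : Fin U) (h : Sum.inl y ∈ S)
    (p : ∀ j : S, Codom U w j) : Fin w := p ⟨Sum.inl y, h⟩

lemma getR_meas {U w : ℕ} {S : Finset (Fin U ⊕ Fin U)} (r : Fin U) (h : Sum.inr r ∈ S) :
    Measurable (getR (U := U) (w := w) r h) := measurable_pi_apply _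

lemma getL_meas {U w : ℕ} {S : Finset (Fin U ⊕ Fin U)} (y : Fin U) (h : Sum.inl y ∈ S) :
    Measurable (getL (U := U) (w := w) y h) := measurable_pi_apply _

/-- The single-row CountSketch estimator
`Z = G_x · Σ_y f(y)·G_y·1{H_y = H_x}`, with i.i.d. uniform hashes on `Fin w` and i.i.d.
uniform signs on `{-1,+1}`, mutually independent, satisfies `E[Z] = f(x)` and
`Var(Z) = (Σ_{y ≠ x} f(y)²)/w`. -/
theorem stmt13 {Ω : Type*} [MeasurableSpace Ω] (P : Measure Ω) [IsProbabilityMeasure P]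
    (U w : ℕ) (hU : 1 ≤ U) (hw : 1 ≤ w)
    (f : Fin U → ℤ) (x : Fin U)
    (H : Fin U → Ω → Fin w) (G : Fin U → Ω → ℝ)
    (hmeas : ∀ i : Fin U ⊕ Fin U, Measurable (Vars H G i))
    (hindep : iIndepFun (Vars H G) P)
    (hdistH : ∀ y, Measure.map (H y) P = (w : ℝ≥0∞)⁻¹ • Measure.count)
    (hdistG : ∀ y, Measure.map (G y) P
      = (2 : ℝ≥0∞)⁻¹ • (Measure.dirac (1 : ℝ) + Measure.dirac (-1 : ℝ)))
    (Z : Ω → ℝ)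
    (hZ : ∀ ω, Z ω = G x ω * ∑ y : Fin U, (f y : ℝ) * G y ω
      * (if H y ω = H x ω then 1 else 0)) :
    ∫ ω, Z ω ∂P = (f x : ℝ) ∧
      variance Z P = (∑ y ∈ Finset.univ.erase x, (f y : ℝ) ^ 2) / w := by
  classical
  have hHm : ∀ y, Measurable (H y) := fun y => hmeas (Sum.inl y)
  have hGm : ∀ y, Measurable (G y) := fun y => hmeas (Sum.inr y)
  have hIm : ∀ y, Measurable (Ind H x y) := fun y =>
    Measurable.ite (measurableSet_eq_fun (hHm y) (hHm x)) measurable_const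
      measurable_const
  have hIb : ∀ y ω, Ind H x y ω = 0 ∨ Ind H x y ω = 1 := fun y ω => by
    unfold Ind; split
    · right; rfl
    · left; rfl
  have hIxx : ∀ ω, Ind H x x ω = 1 := fun ω => by unfold Ind; rw [if_pos rfl]
  have hwne : (w : ℝ) ≠ 0 := by positivity
  -- first moments of the signs
  have hd1 : Integrable (fun t : ℝ => t) (Measure.dirac (1:ℝ)) :=
    (integrable_const (1:ℝ)).congr (ae_eq_dirac (fun t : ℝ => t)).symm
  have hd2 : Integrable (fun t : ℝ => t) (Measure.dirac (-1:ℝ)) :=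
    (integrable_const (-1:ℝ)).congr (ae_eq_dirac (fun t : ℝ => t)).symm
  have hEG : ∀ y, ∫ ω, G y ω ∂P = 0 := by
    intro y
    have h1 : ∫ t, t ∂(Measure.map (G y) P) = ∫ ω, G y ω ∂P :=
      integral_map (hGm y).aemeasurable aestronglyMeasurable_id
    rw [← h1, hdistG y, integral_smul_measure, integral_add_measure hd1 hd2, integral_dirac,
      integral_dirac]
    simp
  have hd1' : Integrable (fun t : ℝ => t ^ 2) (Measure.dirac (1:ℝ)) :=
    (integrable_const ((1:ℝ) ^ 2)).congr (ae_eq_dirac (fun t : ℝ => t ^ 2)).symm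
  have hd2' : Integrable (fun t : ℝ => t ^ 2) (Measure.dirac (-1:ℝ)) :=
    (integrable_const ((-1:ℝ) ^ 2)).congr (ae_eq_dirac (fun t : ℝ => t ^ 2)).symm
  have hEG2 : ∀ y, ∫ ω, G y ω ^ 2 ∂P = 1 := by
    intro y
    have h1 : ∫ t, t ^ 2 ∂(Measure.map (G y) P) = ∫ ω, G y ω ^ 2 ∂P :=
      integral_map (hGm y).aemeasurable (by fun_prop)
    rw [← h1, hdistG y, integral_smul_measure, integral_add_measure hd1' hd2', integral_dirac,
      integral_dirac]
    norm_num
  -- the signs take values in {1, -1} a.e.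
  have hGae : ∀ᵐ ω ∂P, ∀ y, G y ω = 1 ∨ G y ω = -1 := by
    rw [ae_all_iff]
    intro y
    have hs : MeasurableSet (({1, -1} : Set ℝ)ᶜ) :=
      ((measurableSet_singleton 1).union (measurableSet_singleton (-1))).compl
    have h0 : P (G y ⁻¹' (({1, -1} : Set ℝ)ᶜ)) = 0 := by
      rw [← Measure.map_apply (hGm y) hs, hdistG y]
      simp only [Measure.smul_apply, Measure.coe_add, Pi.add_apply,
        Measure.dirac_apply' _ hs]
      rw [Set.indicator_of_notMem (by simp), Set.indicator_of_notMem (by simp)]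
      simp
    rw [ae_iff]
    have hset : {ω | ¬(G y ω = 1 ∨ G y ω = -1)} = G y ⁻¹' (({1, -1} : Set ℝ)ᶜ) := by
      ext ω; simp [not_or]
    rw [hset]; exact h0
  -- distribution of a single hash
  have hHa : ∀ y (a : Fin w), P (H y ⁻¹' {a}) = (w : ℝ≥0∞)⁻¹ := by
    intro y a
    rw [← Measure.map_apply (hHm y) (measurableSet_singleton a), hdistH y]
    simp [Measure.count_singleton]
  have hEind1 : ∀ y (a : Fin w), ∫ ω, (if H y ω = a then (1:ℝ) else 0) ∂P = (w : ℝ)⁻¹ := by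
    intro y a
    have hset : MeasurableSet (H y ⁻¹' {a}) := hHm y (measurableSet_singleton a)
    have heq : (fun ω => if H y ω = a then (1:ℝ) else 0)
        = Set.indicator (H y ⁻¹' {a}) (fun _ => (1:ℝ)) := by
      ext ω; simp [Set.indicator_apply, Set.mem_preimage]
    rw [heq, integral_indicator_const _ hset, measureReal_def, hHa y a]
    simp [ENNReal.toReal_inv]
  have hIndInt : ∀ y (a : Fin w), Integrable (fun ω => if H y ω = a then (1:ℝ) else 0) P := by
    intro y a
    refine Integrable.mono' (integrable_const (1:ℝ))
      ((Measurable.ite (hHm y (measurableSet_singleton a)) measurable_const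
        measurable_const).aestronglyMeasurable) (Filter.Eventually.of_forall fun ω => ?_)
    rw [Real.norm_eq_abs]; split <;> simp
  -- collision probability
  have hEI : ∀ y, y ≠ x → ∫ ω, Ind H x y ω ∂P = (w : ℝ)⁻¹ := by
    intro y hyx
    have hsum : ∀ ω, Ind H x y ω
        = ∑ a : Fin w, (if H y ω = a then (1:ℝ) else 0) * (if H x ω = a then 1 else 0) := by
      intro ω
      unfold Ind
      by_cases h : H y ω = H x ω
      · rw [if_pos h, h]
        rw [Finset.sum_congr rfl (fun a _ => show
            (if H x ω = a then (1:ℝ) else 0) * (if H x ω = a then 1 else 0)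
              = if a = H x ω then 1 else 0 from by
          by_cases h2 : a = H x ω
          · simp [h2]
          · rw [if_neg (fun hh => h2 hh.symm), zero_mul, if_neg h2])]
        rw [Finset.sum_ite_eq' Finset.univ (H x ω) fun _ => (1:ℝ)]
        simp
      · rw [if_neg h]
        refine (Finset.sum_eq_zero fun a _ => ?_).symm
        by_cases h1 : H y ω = a
        · rw [if_pos h1, one_mul, if_neg (fun h2 => h (h1.trans h2.symm))]
        · rw [if_neg h1, zero_mul]
    have hprodInt : ∀ a : Fin w, Integrable
        (fun ω => (if H y ω = a then (1:ℝ) else 0) * (if H x ω = a then 1 else 0)) P := by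
      intro a
      refine Integrable.mono' (integrable_const (1:ℝ))
        (((Measurable.ite (hHm y (measurableSet_singleton a)) measurable_const
          measurable_const).mul (Measurable.ite (hHm x (measurableSet_singleton a))
          measurable_const measurable_const)).aestronglyMeasurable)
        (Filter.Eventually.of_forall fun ω => ?_)
      rw [Real.norm_eq_abs, abs_mul]
      have h1 : |if H y ω = a then (1:ℝ) else 0| ≤ 1 := by split <;> simp
      have h2 : |if H x ω = a then (1:ℝ) else 0| ≤ 1 := by split <;> simp
      nlinarith [abs_nonneg (if H y ω = a then (1:ℝ) else 0)]
    rw [integral_congr_ae (ae_of_all _ hsum), integral_finset_sum _ fun a _ => hprodInt a]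
    have hindyx : IndepFun (H y) (H x) P :=
      hindep.indepFun (show (Sum.inl y : Fin U ⊕ Fin U) ≠ Sum.inl x by simp [hyx])
    have hterm : ∀ a : Fin w,
        ∫ ω, (if H y ω = a then (1:ℝ) else 0) * (if H x ω = a then 1 else 0) ∂P
          = (w : ℝ)⁻¹ * (w : ℝ)⁻¹ := by
      intro a
      have hc : IndepFun (fun ω => if H y ω = a then (1:ℝ) else 0)
          (fun ω => if H x ω = a then (1:ℝ) else 0) P :=
        hindyx.comp (φ := fun b => if b = a then (1:ℝ) else 0)
          (ψ := fun b => if b = a then (1:ℝ) else 0) Measurable.of_discrete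
          Measurable.of_discrete
      have h3 := hc.integral_fun_mul_eq_mul_integral (hIndInt y a).aestronglyMeasurable
        (hIndInt x a).aestronglyMeasurable
      exact h3.trans (by rw [hEind1 y a, hEind1 x a])
    rw [Finset.sum_congr rfl fun a _ => hterm a]
    simp only [Finset.sum_const, Finset.card_univ, Fintype.card_fin, nsmul_eq_mul]
    field_simp
  -- key: E[G_i · ψ(other coordinates)] = 0
  have key : ∀ (i : Fin U) (ψ : (∀ j : (Finset.univ.erase (Sum.inr i) :
      Finset (Fin U ⊕ Fin U)), Codom U w j) → ℝ), Measurable ψ →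
      ∫ ω, G i ω * ψ (fun j => Vars H G j ω) ∂P = 0 := by
    intro i ψ hψ
    have hid := key_indep hmeas hindep i ψ hψ
    have hY : AEStronglyMeasurable (fun ω => ψ fun j => Vars H G j ω) P :=
      (hψ.comp (measurable_pi_lambda _ fun j => hmeas j)).aestronglyMeasurable
    have h4 := hid.integral_fun_mul_eq_mul_integral (hGm i).aestronglyMeasurable hY
    rw [hEG i, zero_mul] at h4
    exact h4

  -- general vanishing lemma for cross terms
  have hgen : ∀ (i r y z : Fin U), r ≠ i →
      ∫ ω, G i ω * (G r ω * (Ind H x y ω * Ind H x z ω)) ∂P = 0 := by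
    intro i r y z hri
    have h1 : (Sum.inr r : Fin U ⊕ Fin U) ∈ Finset.univ.erase (Sum.inr i) := by simp [hri]
    have h2 : (Sum.inl y : Fin U ⊕ Fin U) ∈ Finset.univ.erase (Sum.inr i) := by simp
    have h3 : (Sum.inl z : Fin U ⊕ Fin U) ∈ Finset.univ.erase (Sum.inr i) := by simp
    have h4 : (Sum.inl x : Fin U ⊕ Fin U) ∈ Finset.univ.erase (Sum.inr i) := by simp
    have hψ : Measurable (fun p : ∀ j : (Finset.univ.erase (Sum.inr i) :
        Finset (Fin U ⊕ Fin U)), Codom U w j =>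
        getR r h1 p *
          ((if getL y h2 p = getL x h4 p then (1:ℝ) else 0) *
           (if getL z h3 p = getL x h4 p then (1:ℝ) else 0))) := by
      refine (getR_meas r h1).mul (Measurable.mul ?_ ?_)
      · exact Measurable.ite (measurableSet_eq_fun (getL_meas y h2)
          (getL_meas x h4)) measurable_const measurable_const
      · exact Measurable.ite (measurableSet_eq_fun (getL_meas z h3)
          (getL_meas x h4)) measurable_const measurable_const
    exact key i _ hψ
  -- generic integrability
  have hIntGen : ∀ (c : ℝ) (i r y z : Fin U), Integrable
      (fun ω => c * (G i ω * (G r ω * (Ind H x y ω * Ind H x z ω)))) P := by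
    intro c i r y z
    refine Integrable.mono' (integrable_const |c|)
      (((hGm i).mul ((hGm r).mul ((hIm y).mul (hIm z)))).const_mul c).aestronglyMeasurable ?_
    filter_upwards [hGae] with ω h
    have hi : |G i ω| = 1 := by rcases h i with h'|h' <;> simp [h']
    have hr : |G r ω| = 1 := by rcases h r with h'|h' <;> simp [h']
    have hy' : |Ind H x y ω| ≤ 1 := by rcases hIb y ω with h'|h' <;> simp [h']
    have hz' : |Ind H x z ω| ≤ 1 := by rcases hIb z ω with h'|h' <;> simp [h']
    rw [Real.norm_eq_abs, abs_mul, abs_mul, abs_mul, abs_mul, hi, hr, one_mul, one_mul]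
    exact mul_le_of_le_one_right (abs_nonneg c)
      (mul_le_one₀ hy' (abs_nonneg _) hz')
  have hIntGen2 : ∀ (c : ℝ) (y z : Fin U), Integrable
      (fun ω => c * (G x ω ^ 2 * (G y ω * (G z ω * (Ind H x y ω * Ind H x z ω))))) P := by
    intro c y z
    refine Integrable.mono' (integrable_const |c|)
      ((((hGm x).pow_const 2).mul ((hGm y).mul ((hGm z).mul
        ((hIm y).mul (hIm z))))).const_mul c).aestronglyMeasurable ?_
    filter_upwards [hGae] with ω h
    have hx2 : G x ω ^ 2 = 1 := by rcases h x with h'|h' <;> rw [h'] <;> norm_num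
    have hyv : |G y ω| = 1 := by rcases h y with h'|h' <;> simp [h']
    have hzv : |G z ω| = 1 := by rcases h z with h'|h' <;> simp [h']
    have hy' : |Ind H x y ω| ≤ 1 := by rcases hIb y ω with h'|h' <;> simp [h']
    have hz' : |Ind H x z ω| ≤ 1 := by rcases hIb z ω with h'|h' <;> simp [h']
    rw [Real.norm_eq_abs, hx2, abs_mul, abs_mul, abs_mul, abs_mul, abs_one, one_mul, hyv, hzv,
      one_mul, one_mul, abs_mul]
    exact mul_le_of_le_one_right (abs_nonneg c)
      (mul_le_one₀ hy' (abs_nonneg _) hz')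
  -- expectation of Z
  have hEZ : ∫ ω, Z ω ∂P = (f x : ℝ) := by
    have hrw : ∀ ω, Z ω
        = ∑ y : Fin U, (f y : ℝ) * (G x ω * (G y ω * (Ind H x y ω * Ind H x x ω))) := by
      intro ω; rw [hZ ω, Finset.mul_sum]
      refine Finset.sum_congr rfl fun y _ => ?_
      unfold Ind; rw [if_pos rfl]; ring
    rw [integral_congr_ae (ae_of_all _ hrw),
      integral_finset_sum _ fun y _ => hIntGen _ x y y x]
    have hside : ∀ y ∈ Finset.univ, y ≠ x →
        ∫ ω, (f y : ℝ) * (G x ω * (G y ω * (Ind H x y ω * Ind H x x ω))) ∂P = 0 := by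
      intro y _ hyx
      rw [integral_const_mul, hgen x y y x hyx, mul_zero]
    rw [Finset.sum_eq_single_of_mem x (Finset.mem_univ x) hside]
    have hterm : ∀ ω, (f x : ℝ) * (G x ω * (G x ω * (Ind H x x ω * Ind H x x ω)))
        = (f x : ℝ) * G x ω ^ 2 := by
      intro ω; rw [hIxx]; ring
    rw [integral_congr_ae (ae_of_all _ hterm), integral_const_mul, hEG2 x, mul_one]
  -- measurability and boundedness of Z
  have hZm : Measurable Z := by
    have hzeq : Z = fun ω => G x ω * ∑ y : Fin U, (f y : ℝ) * G y ω
        * (if H y ω = H x ω then 1 else 0) := funext hZ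
    rw [hzeq]
    exact (hGm x).mul (Finset.measurable_sum _ fun y _ => ((hGm y).const_mul _).mul (hIm y))
  have hZb : ∀ᵐ ω ∂P, ‖Z ω‖ ≤ ∑ y : Fin U, |(f y : ℝ)| := by
    filter_upwards [hGae] with ω h
    rw [hZ ω, Real.norm_eq_abs, abs_mul]
    have hgx : |G x ω| = 1 := by rcases h x with h'|h' <;> simp [h']
    rw [hgx, one_mul]
    refine (Finset.abs_sum_le_sum_abs _ _).trans (Finset.sum_le_sum fun y _ => ?_)
    rw [abs_mul, abs_mul]
    have hgy : |G y ω| = 1 := by rcases h y with h'|h' <;> simp [h']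
    rw [hgy, mul_one]
    have hi1 : |(if H y ω = H x ω then (1:ℝ) else 0)| ≤ 1 := by split <;> simp
    calc |(f y : ℝ)| * |if H y ω = H x ω then (1:ℝ) else 0| ≤ |(f y : ℝ)| * 1 :=
          mul_le_mul_of_nonneg_left hi1 (abs_nonneg _)
      _ = |(f y : ℝ)| := mul_one _
  have hmem : MemLp Z 2 P :=
    (memLp_top_of_bound hZm.aestronglyMeasurable _ hZb).mono_exponent le_top
  refine ⟨hEZ, ?_⟩
  rw [variance_eq_sub hmem]
  -- compute the second moment
  have hinner : ∀ y : Fin U, (∑ z : Fin U, ∫ ω, ((f y : ℝ) * f z) *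
      (G x ω ^ 2 * (G y ω * (G z ω * (Ind H x y ω * Ind H x z ω)))) ∂P)
      = (if y = x then (f x : ℝ) ^ 2 else (f y : ℝ) ^ 2 * (w : ℝ)⁻¹) := by
    intro y
    by_cases hy : y = x
    · rw [hy, if_pos rfl]
      have hside : ∀ z ∈ Finset.univ, z ≠ x → ∫ ω, ((f x : ℝ) * f z) *
          (G x ω ^ 2 * (G x ω * (G z ω * (Ind H x x ω * Ind H x z ω)))) ∂P = 0 := by
        intro z _ hzx
        have hae : ∀ᵐ ω ∂P, ((f x : ℝ) * f z) *
            (G x ω ^ 2 * (G x ω * (G z ω * (Ind H x x ω * Ind H x z ω))))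
            = ((f x : ℝ) * f z) * (G x ω * (G z ω * (Ind H x z ω * Ind H x x ω))) := by
          filter_upwards [hGae] with ω h
          rcases h x with h'|h' <;> rw [h'] <;> ring
        rw [integral_congr_ae hae, integral_const_mul, hgen x z z x hzx, mul_zero]
      rw [Finset.sum_eq_single_of_mem x (Finset.mem_univ x) hside]
      have hae : ∀ᵐ ω ∂P, ((f x : ℝ) * f x) *
          (G x ω ^ 2 * (G x ω * (G x ω * (Ind H x x ω * Ind H x x ω)))) = (f x : ℝ) ^ 2 := by
        filter_upwards [hGae] with ω h
        rw [hIxx]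
        rcases h x with h'|h' <;> rw [h'] <;> ring
      rw [integral_congr_ae hae, integral_const]
      simp
    · have hside : ∀ z ∈ Finset.univ, z ≠ y → ∫ ω, ((f y : ℝ) * f z) *
          (G x ω ^ 2 * (G y ω * (G z ω * (Ind H x y ω * Ind H x z ω)))) ∂P = 0 := by
        intro z _ hzy
        by_cases hzx : z = x
        · rw [hzx]
          have hae : ∀ᵐ ω ∂P, ((f y : ℝ) * f x) *
              (G x ω ^ 2 * (G y ω * (G x ω * (Ind H x y ω * Ind H x x ω))))
              = ((f y : ℝ) * f x) * (G x ω * (G y ω * (Ind H x y ω * Ind H x x ω))) := by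
            filter_upwards [hGae] with ω h
            rcases h x with h'|h' <;> rw [h'] <;> ring
          rw [integral_congr_ae hae, integral_const_mul,
            hgen x y y x (fun hh => hy hh), mul_zero]
        · have hae : ∀ᵐ ω ∂P, ((f y : ℝ) * f z) *
              (G x ω ^ 2 * (G y ω * (G z ω * (Ind H x y ω * Ind H x z ω))))
              = ((f y : ℝ) * f z) * (G y ω * (G z ω * (Ind H x y ω * Ind H x z ω))) := by
            filter_upwards [hGae] with ω h
            have hx2 : G x ω ^ 2 = 1 := by rcases h x with h'|h' <;> rw [h'] <;> norm_num
            rw [hx2, one_mul]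
          rw [integral_congr_ae hae, integral_const_mul, hgen y z y z hzy, mul_zero]
      rw [Finset.sum_eq_single_of_mem y (Finset.mem_univ y) hside, if_neg hy]
      have hae : ∀ᵐ ω ∂P, ((f y : ℝ) * f y) *
          (G x ω ^ 2 * (G y ω * (G y ω * (Ind H x y ω * Ind H x y ω))))
          = ((f y : ℝ) * f y) * Ind H x y ω := by
        filter_upwards [hGae] with ω h
        have hx2 : G x ω ^ 2 = 1 := by rcases h x with h'|h' <;> rw [h'] <;> norm_num
        have hy2 : G y ω * G y ω = 1 := by rcases h y with h'|h' <;> rw [h'] <;> norm_num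
        have hI2 : Ind H x y ω * Ind H x y ω = Ind H x y ω := by
          rcases hIb y ω with h'|h' <;> rw [h'] <;> norm_num
        calc ((f y : ℝ) * f y) *
            (G x ω ^ 2 * (G y ω * (G y ω * (Ind H x y ω * Ind H x y ω))))
            = ((f y : ℝ) * f y) *
              (G x ω ^ 2 * ((G y ω * G y ω) * (Ind H x y ω * Ind H x y ω))) := by ring
          _ = ((f y : ℝ) * f y) * Ind H x y ω := by rw [hx2, hy2, hI2, one_mul, one_mul]
      rw [integral_congr_ae hae, integral_const_mul, hEI y hy]
      ring
  have hEZ2 : ∫ ω, (Z ^ 2) ω ∂P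
      = (f x : ℝ) ^ 2 + ∑ y ∈ Finset.univ.erase x, (f y : ℝ) ^ 2 * (w : ℝ)⁻¹ := by
    have hrw : ∀ ω, (Z ^ 2) ω = ∑ y : Fin U, ∑ z : Fin U, ((f y : ℝ) * f z) *
        (G x ω ^ 2 * (G y ω * (G z ω * (Ind H x y ω * Ind H x z ω)))) := by
      intro ω
      rw [Pi.pow_apply, hZ ω, mul_pow,
        pow_two (∑ y : Fin U, (f y : ℝ) * G y ω * (if H y ω = H x ω then 1 else 0)),
        Finset.sum_mul_sum, Finset.mul_sum]
      refine Finset.sum_congr rfl fun y _ => ?_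
      rw [Finset.mul_sum]
      refine Finset.sum_congr rfl fun z _ => ?_
      unfold Ind; ring
    rw [integral_congr_ae (ae_of_all _ hrw),
      integral_finset_sum _ fun y _ => integrable_finset_sum _ fun z _ => hIntGen2 _ y z,
      Finset.sum_congr rfl fun y _ => integral_finset_sum _ fun z _ => hIntGen2 _ y z,
      Finset.sum_congr rfl fun y _ => hinner y,
      ← Finset.add_sum_erase _ _ (Finset.mem_univ x), if_pos rfl]
    congr 1
    refine Finset.sum_congr rfl fun y hy => ?_
    rw [if_neg (Finset.ne_of_mem_erase hy)]
  rw [hEZ2, hEZ]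
  have hdiv : (∑ y ∈ Finset.univ.erase x, (f y : ℝ) ^ 2) / w
      = ∑ y ∈ Finset.univ.erase x, (f y : ℝ) ^ 2 * (w : ℝ)⁻¹ := by
    rw [Finset.sum_div]
    exact Finset.sum_congr rfl fun y _ => div_eq_mul_inv _ _
  rw [hdiv]
  ring
end

section
/- Let d, w, U ≥ 1, let f : Fin U → ℕ be a frequency function with total count N = Σ_{y} f(y) ≥ 1, fix an item x ∈ Fin U and γ > 0. Let (H_r(y))_{r ∈ Fin d, y ∈ Fin U} be i.i.d. uniform random variables on Fin w. Then the probability that every row overestimates by at least γN — i.e., P( for all r ∈ Fin d, Σ_{y ≠ x : H_r(y) = H_r(x)} f(y) ≥ γ·N ) — is at most (1/(γ·w))^d. Equivalently, the d-row Count-Min estimate f̃(x) = min_r Σ_{y : H_r(y) = H_r(x)} f(y) satisfies P( f̃(x) − f(x) ≥ γN ) ≤ (γw)^{−d}. -/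
open MeasureTheory ProbabilityTheory Real
open scoped ENNReal NNReal

/-- For a `d`-row Count-Min sketch with `w` columns under fully random
i.i.d. hashing, the probability that every row overestimates `f(x)` by at least `γ·N` is at
most `(1/(γw))^d`; equivalently `P(f̃(x) - f(x) ≥ γN) ≤ (γw)^{-d}`. -/
theorem stmt14 {Ω : Type*} [MeasurableSpace Ω] (P : Measure Ω) [IsProbabilityMeasure P]
    (d w U : ℕ) (hd : 1 ≤ d) (hw : 1 ≤ w) (hU : 1 ≤ U)
    (f : Fin U → ℕ) (N : ℕ) (hN : N = ∑ y : Fin U, f y) (hN1 : 1 ≤ N)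
    (x : Fin U) (γ : ℝ) (hγ : 0 < γ)
    (H : Fin d × Fin U → Ω → Fin w)
    (hmeas : ∀ p, Measurable (H p))
    (hindep : iIndepFun H P)
    (hdist : ∀ p, Measure.map (H p) P = (w : ℝ≥0∞)⁻¹ • Measure.count) :
    P {ω | ∀ r : Fin d,
        γ * N ≤ ∑ y ∈ Finset.univ.erase x,
          (f y : ℝ) * (if H (r, y) ω = H (r, x) ω then 1 else 0)}
      ≤ ENNReal.ofReal ((1 / (γ * w)) ^ d) := by
  classical
  have hw0 : (w : ℝ≥0∞) ≠ 0 := by exact_mod_cast Nat.one_le_iff_ne_zero.mp hw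
  have hwtop : (w : ℝ≥0∞) ≠ ⊤ := ENNReal.natCast_ne_top w
  have hN0 : (N : ℝ≥0∞) ≠ 0 := by exact_mod_cast Nat.one_le_iff_ne_zero.mp hN1
  have hNtop : (N : ℝ≥0∞) ≠ ⊤ := ENNReal.natCast_ne_top N
  set c : ℝ≥0∞ := ENNReal.ofReal (1 / (γ * w)) with hc
  -- the per-row events
  set A : Fin d → Set Ω := fun r => {ω | γ * N ≤ ∑ y ∈ Finset.univ.erase x,
      (f y : ℝ) * (if H (r, y) ω = H (r, x) ω then 1 else 0)} with hA
  -- collision set and probability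
  have hpoint : ∀ p (k : Fin w), P (H p ⁻¹' {k}) = (w : ℝ≥0∞)⁻¹ := by
    intro p k
    rw [← Measure.map_apply (hmeas p) (measurableSet_singleton k), hdist]
    simp [Measure.count_singleton]
  have hcolset : ∀ (r : Fin d) (y : Fin U),
      {ω | H (r, y) ω = H (r, x) ω} = ⋃ k : Fin w, (H (r, y) ⁻¹' {k} ∩ H (r, x) ⁻¹' {k}) := by
    intro r y
    ext ω
    simp only [Set.mem_setOf_eq, Set.mem_iUnion, Set.mem_inter_iff, Set.mem_preimage,
      Set.mem_singleton_iff]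
    constructor
    · intro h; exact ⟨H (r, x) ω, h, rfl⟩
    · rintro ⟨k, h1, h2⟩; rw [h1, h2]
  have hcolmeas : ∀ (r : Fin d) (y : Fin U), MeasurableSet {ω | H (r, y) ω = H (r, x) ω} := by
    intro r y
    rw [hcolset r y]
    exact MeasurableSet.iUnion fun k =>
      ((hmeas _ (measurableSet_singleton k)).inter (hmeas _ (measurableSet_singleton k)))
  have hcol : ∀ (r : Fin d) (y : Fin U), y ≠ x →
      P {ω | H (r, y) ω = H (r, x) ω} = (w : ℝ≥0∞)⁻¹ := by
    intro r y hyx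
    have hind : IndepFun (H (r, y)) (H (r, x)) P :=
      hindep.indepFun (by simp [Prod.ext_iff, hyx])
    rw [hcolset r y, measure_iUnion ?_ (fun k =>
      (hmeas _ (measurableSet_singleton k)).inter (hmeas _ (measurableSet_singleton k)))]
    · have : ∀ k : Fin w, P (H (r, y) ⁻¹' {k} ∩ H (r, x) ⁻¹' {k}) = (w : ℝ≥0∞)⁻¹ * (w : ℝ≥0∞)⁻¹ := by
        intro k
        rw [(indepFun_iff_measure_inter_preimage_eq_mul.mp hind) {k} {k}
          (measurableSet_singleton k) (measurableSet_singleton k), hpoint, hpoint]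
      rw [tsum_fintype]
      simp only [this, Finset.sum_const, Finset.card_univ, Fintype.card_fin, nsmul_eq_mul]
      rw [← mul_assoc, ENNReal.mul_inv_cancel hw0 hwtop, one_mul]
    · intro k k' hkk'
      simp only [Function.onFun, Set.disjoint_left]
      rintro ω ⟨h1, _⟩ ⟨h3, _⟩
      exact hkk' (by simp only [Set.mem_preimage, Set.mem_singleton_iff] at h1 h3; rw [← h1, ← h3])
  -- Markov: per-row bound
  have hrow : ∀ r : Fin d, P (A r) ≤ c := by
    intro r
    set g : Ω → ℝ≥0∞ := fun ω => ∑ y ∈ Finset.univ.erase x,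
      (f y : ℝ≥0∞) * (if H (r, y) ω = H (r, x) ω then 1 else 0) with hg
    have hgmeas : Measurable g := by
      apply Finset.measurable_sum
      intro y _
      exact (measurable_const.ite (hcolmeas r y) measurable_const).const_mul _
    have hgint : ∫⁻ ω, g ω ∂P ≤ (N : ℝ≥0∞) * (w : ℝ≥0∞)⁻¹ := by
      rw [hg, lintegral_finset_sum _ (fun y _ =>
        (measurable_const.ite (hcolmeas r y) measurable_const).const_mul _)]
      have : ∀ y ∈ Finset.univ.erase x,
          ∫⁻ ω, (f y : ℝ≥0∞) * (if H (r, y) ω = H (r, x) ω then 1 else 0) ∂P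
            = (f y : ℝ≥0∞) * (w : ℝ≥0∞)⁻¹ := by
        intro y hy
        rw [lintegral_const_mul _ (measurable_const.ite (hcolmeas r y) measurable_const)]
        congr 1
        have h1 : ∀ ω, (if H (r, y) ω = H (r, x) ω then (1 : ℝ≥0∞) else 0)
            = Set.indicator {ω | H (r, y) ω = H (r, x) ω} (1 : Ω → ℝ≥0∞) ω := by
          intro ω; simp [Set.indicator_apply]
        simp_rw [h1]
        rw [lintegral_indicator_one (hcolmeas r y), hcol r y (Finset.mem_erase.mp hy).1]
      rw [Finset.sum_congr rfl this, ← Finset.sum_mul]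
      apply mul_le_mul_left
      calc (∑ y ∈ Finset.univ.erase x, (f y : ℝ≥0∞))
          ≤ ∑ y : Fin U, (f y : ℝ≥0∞) := Finset.sum_le_sum_of_subset (Finset.erase_subset _ _)
        _ = (N : ℝ≥0∞) := by rw [hN]; push_cast; ring
    have hsub : A r ⊆ {ω | ENNReal.ofReal (γ * N) ≤ g ω} := by
      intro ω hω
      have h1 : ENNReal.ofReal (γ * N) ≤ ENNReal.ofReal (∑ y ∈ Finset.univ.erase x,
          (f y : ℝ) * (if H (r, y) ω = H (r, x) ω then 1 else 0)) := ENNReal.ofReal_le_ofReal hω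
      refine h1.trans_eq ?_
      rw [ENNReal.ofReal_sum_of_nonneg (fun y _ => by positivity)]
      apply Finset.sum_congr rfl
      intro y _
      by_cases h : H (r, y) ω = H (r, x) ω <;> simp [h]
    have hmark := mul_meas_ge_le_lintegral₀ (μ := P) hgmeas.aemeasurable (ENNReal.ofReal (γ * N))
    have ha0 : ENNReal.ofReal (γ * N) ≠ 0 := by
      simp only [ne_eq, ENNReal.ofReal_eq_zero, not_le]
      positivity
    have hatop : ENNReal.ofReal (γ * N) ≠ ⊤ := ENNReal.ofReal_ne_top
    have hP : P (A r) ≤ (N : ℝ≥0∞) * (w : ℝ≥0∞)⁻¹ * (ENNReal.ofReal (γ * N))⁻¹ := by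
      have h2 : ENNReal.ofReal (γ * N) * P (A r) ≤ (N : ℝ≥0∞) * (w : ℝ≥0∞)⁻¹ :=
        le_trans (mul_le_mul_right (measure_mono hsub) _) (hmark.trans hgint)
      rw [mul_comm, ← ENNReal.le_div_iff_mul_le (Or.inl ha0) (Or.inl hatop)] at h2
      rwa [div_eq_mul_inv] at h2
    refine hP.trans_eq ?_
    have hγN : ENNReal.ofReal (γ * N) = ENNReal.ofReal γ * N := by
      rw [ENNReal.ofReal_mul hγ.le, ENNReal.ofReal_natCast]
    have hγ0 : ENNReal.ofReal γ ≠ 0 := by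
      simp only [ne_eq, ENNReal.ofReal_eq_zero, not_le]; exact hγ
    rw [hγN, ENNReal.mul_inv (Or.inl hγ0) (Or.inl ENNReal.ofReal_ne_top), hc,
      one_div, ENNReal.ofReal_inv_of_pos (by positivity),
      ENNReal.ofReal_mul hγ.le, ENNReal.ofReal_natCast,
      ENNReal.mul_inv (Or.inl hγ0) (Or.inl ENNReal.ofReal_ne_top)]
    calc (N : ℝ≥0∞) * (w : ℝ≥0∞)⁻¹ * ((ENNReal.ofReal γ)⁻¹ * (N : ℝ≥0∞)⁻¹)
        = ((N : ℝ≥0∞) * (N : ℝ≥0∞)⁻¹) * ((w : ℝ≥0∞)⁻¹ * (ENNReal.ofReal γ)⁻¹) := by ring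
      _ = (ENNReal.ofReal γ)⁻¹ * (w : ℝ≥0∞)⁻¹ := by
          rw [ENNReal.mul_inv_cancel hN0 hNtop, one_mul, mul_comm]
  -- Independence across rows, by induction on finsets of rows
  have hAeq : ∀ (s : Finset (Fin d)),
      (⋂ r ∈ s, A r) = (fun ω (i : (s ×ˢ (Finset.univ : Finset (Fin U)) : Finset (Fin d × Fin U)))
        => H i ω) ⁻¹' {v | ∀ r (hr : r ∈ s), γ * N ≤ ∑ y ∈ Finset.univ.erase x,
          (f y : ℝ) * (if v ⟨(r, y), Finset.mem_product.mpr ⟨hr, Finset.mem_univ y⟩⟩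
            = v ⟨(r, x), Finset.mem_product.mpr ⟨hr, Finset.mem_univ x⟩⟩ then 1 else 0)} := by
    intro s
    ext ω
    simp only [Set.mem_iInter, Set.mem_preimage, Set.mem_setOf_eq, hA]
  have hAeq1 : ∀ (r₀ : Fin d),
      A r₀ = (fun ω (i : (({r₀} : Finset (Fin d)) ×ˢ (Finset.univ : Finset (Fin U))
          : Finset (Fin d × Fin U))) => H i ω) ⁻¹' {v | γ * N ≤ ∑ y ∈ Finset.univ.erase x,
          (f y : ℝ) * (if v ⟨(r₀, y), Finset.mem_product.mpr ⟨Finset.mem_singleton_self r₀,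
              Finset.mem_univ y⟩⟩
            = v ⟨(r₀, x), Finset.mem_product.mpr ⟨Finset.mem_singleton_self r₀,
              Finset.mem_univ x⟩⟩ then 1 else 0)} := by
    intro r₀; rfl
  have key : ∀ s : Finset (Fin d), P (⋂ r ∈ s, A r) ≤ c ^ s.card := by
    intro s
    induction s using Finset.induction_on with
    | empty => simp
    | @insert r₀ s hr₀ ih =>
      rw [Finset.set_biInter_insert]
      have hdisj : Disjoint (({r₀} : Finset (Fin d)) ×ˢ (Finset.univ : Finset (Fin U)))
          (s ×ˢ (Finset.univ : Finset (Fin U))) := by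
        rw [Finset.disjoint_left]
        rintro ⟨a, b⟩ h1 h2
        rw [Finset.mem_product] at h1 h2
        exact hr₀ ((Finset.mem_singleton.mp h1.1) ▸ h2.1)
      have hIF := hindep.indepFun_finset _ _ hdisj hmeas
      have heq := fun BS BT => (indepFun_iff_measure_inter_preimage_eq_mul.mp hIF) BS BT
        ((Set.toFinite BS).measurableSet) ((Set.toFinite BT).measurableSet)
      rw [hAeq1 r₀, hAeq s, heq, ← hAeq1 r₀, ← hAeq s,
        Finset.card_insert_of_notMem hr₀, pow_succ, mul_comm (c ^ s.card) c]
      exact mul_le_mul' (hrow r₀) ih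
  have hmain : {ω | ∀ r : Fin d,
      γ * N ≤ ∑ y ∈ Finset.univ.erase x,
        (f y : ℝ) * (if H (r, y) ω = H (r, x) ω then 1 else 0)}
      = ⋂ r ∈ (Finset.univ : Finset (Fin d)), A r := by
    ext ω; simp [hA]
  rw [hmain]
  refine (key Finset.univ).trans_eq ?_
  rw [Finset.card_univ, Fintype.card_fin, hc, ← ENNReal.ofReal_pow (by positivity)]
end
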